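/- arXiv:1907.04109 — 9 statements merged into one kernel-verified Lean document; each statement's English description precedes it below -/
import Mathlib

section
/- Let n ≥ 1 be a natural number and p ∈ ℂ with pⁿ = −n. Let f ∈ X + X²ℂ[[X]] satisfy p·f = f'·(f∘(pX)) and suppose coeff_k f = 0 for every k ≥ 2 with k ≢ 1 (mod n). Set A_k := coeff_{kn+1} f (so A₀ = 1). Then for every k ≥ 1: (k − (−n)^{k−1})·A_k = Σ_{m=1}^{k−1} (n·m + 1)·(−n)^{k−m−1}·A_m·A_{k−m}, where −n denotes the complex number −n. -/
open PowerSeries Finset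

/-- **Proposition 1.3.** Let `n ≥ 1`, `pⁿ = -n`, and let `f ∈ X + X²ℂ[[X]]` satisfy
`p·f = f'·(f∘(pX))` with `coeff_k f = 0` for all `k ≥ 2`, `k ≢ 1 (mod n)`.
Writing `A_k := coeff_{kn+1} f`, for every `k ≥ 1` one has
`(k − (−n)^{k−1})·A_k = Σ_{m=1}^{k−1} (n·m + 1)·(−n)^{k−m−1}·A_m·A_{k−m}`. -/
theorem statement2 (n : ℕ) (hn : 1 ≤ n) (p : ℂ) (hp : p ^ n = -(n : ℂ))
    (f : PowerSeries ℂ)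
    (h0 : coeff 0 f = 0) (h1 : coeff 1 f = 1)
    (heq : C p * f = (d⁄dX ℂ f) * rescale p f)
    (hvan : ∀ k, 2 ≤ k → ¬ (k ≡ 1 [MOD n]) → coeff k f = 0) :
    ∀ k : ℕ, 1 ≤ k →
      ((k : ℂ) - (-(n : ℂ)) ^ (k - 1)) * coeff (k * n + 1) f =
        ∑ m ∈ Ico 1 k, ((n : ℂ) * (m : ℂ) + 1) * (-(n : ℂ)) ^ (k - m - 1) *
          coeff (m * n + 1) f * coeff ((k - m) * n + 1) f := by
  -- p ≠ 0 and -n ≠ 0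
  have hn0 : (n : ℂ) ≠ 0 := Nat.cast_ne_zero.mpr (by omega)
  have hnn0 : -(n : ℂ) ≠ 0 := neg_ne_zero.mpr hn0
  have hp0 : p ≠ 0 := by
    intro h
    rw [h, zero_pow (by omega)] at hp
    exact hn0 (neg_eq_zero.mp hp.symm)
  -- support of f
  have hsupp : ∀ j : ℕ, coeff j f ≠ 0 → ∃ m : ℕ, j = m * n + 1 := by
    intro j hj
    match j, hj with
    | 0, hj => exact absurd h0 hj
    | 1, hj => exact ⟨0, by ring⟩
    | (j+2), hj =>
      by_cases hmod : (j + 2) ≡ 1 [MOD n]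
      · have hd : n ∣ (j + 2) - 1 := (Nat.modEq_iff_dvd' (by omega)).mp hmod.symm
        obtain ⟨m, hm⟩ := hd
        rw [Nat.mul_comm] at hm
        exact ⟨m, by omega⟩
      · exact absurd (hvan _ (by omega) hmod) hj
  intro k hk
  -- coefficient of degree k*n+1 in heq
  have hc := congrArg (coeff (k * n + 1)) heq
  rw [coeff_C_mul, coeff_mul] at hc
  -- the sum over the antidiagonal reduces to the image of range (k+1)
  set F : ℕ × ℕ → ℂ := fun q =>
    coeff q.1 (d⁄dX ℂ f) * coeff q.2 (rescale p f) with hF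
  have himg : ∑ q ∈ Finset.HasAntidiagonal.antidiagonal (k * n + 1), F q
      = ∑ m ∈ Finset.range (k+1), F (m * n, (k - m) * n + 1) := by
    have hinj : ∀ a ∈ Finset.range (k+1), ∀ b ∈ Finset.range (k+1),
        ((a * n, (k - a) * n + 1) : ℕ × ℕ) = (b * n, (k - b) * n + 1) → a = b := by
      intro a _ b _ hab
      have h' : a * n = b * n := congrArg Prod.fst hab
      exact Nat.eq_of_mul_eq_mul_right (by omega) h'
    rw [← Finset.sum_image (f := F) (g := fun m => (m * n, (k - m) * n + 1)) hinj]
    refine (Finset.sum_subset ?_ ?_).symm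
    · intro q hq
      simp only [Finset.mem_image, Finset.mem_range] at hq
      obtain ⟨m, hm, rfl⟩ := hq
      simp only [Finset.HasAntidiagonal.mem_antidiagonal]
      have h1' : (k - m) * n = k * n - m * n := Nat.sub_mul k m n
      have h2' : m * n ≤ k * n := Nat.mul_le_mul_right n (by omega)
      omega
    · intro q hq hq2
      by_contra hne
      have hd1 : coeff (q.1 + 1) f ≠ 0 := by
        intro h
        apply hne
        simp [hF, coeff_derivative, h]
      have hd2 : coeff q.2 f ≠ 0 := by
        intro h
        apply hne
        simp [hF, coeff_rescale, h]
      obtain ⟨m, hm⟩ := hsupp _ hd1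
      have hq1 : q.1 = m * n := by omega
      have hq2' : q.2 ≥ 1 := by
        rcases Nat.eq_zero_or_pos q.2 with h | h
        · rw [h] at hd2; exact absurd h0 hd2
        · exact h
      have hsum : q.1 + q.2 = k * n + 1 := Finset.HasAntidiagonal.mem_antidiagonal.mp hq
      have hle : m * n ≤ k * n := by omega
      have hmk : m ≤ k := Nat.le_of_mul_le_mul_right hle (by omega)
      apply hq2
      simp only [Finset.mem_image, Finset.mem_range]
      refine ⟨m, by omega, ?_⟩
      have hsm : (k - m) * n = k * n - m * n := Nat.sub_mul k m n
      have h2 : q.2 = (k - m) * n + 1 := by omega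
      rw [← hq1, ← h2]
  rw [himg] at hc
  -- compute each term
  have hterm : ∀ m ∈ Finset.range (k+1), F (m * n, (k - m) * n + 1)
      = ((n : ℂ) * m + 1) * (-(n:ℂ))^(k - m) * coeff (m*n+1) f
        * coeff ((k-m)*n+1) f * p := by
    intro m hm
    simp only [hF, coeff_derivative, coeff_rescale]
    have : p ^ ((k - m) * n + 1) = (-(n:ℂ))^(k-m) * p := by
      rw [pow_succ, pow_mul', hp]
    rw [this]
    push_cast
    ring
  rw [Finset.sum_congr rfl hterm] at hc
  -- cancel p
  have hc2 : coeff (k*n+1) f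
      = ∑ m ∈ Finset.range (k+1), ((n : ℂ) * m + 1) * (-(n:ℂ))^(k - m)
          * coeff (m*n+1) f * coeff ((k-m)*n+1) f := by
    apply mul_left_cancel₀ hp0
    rw [hc, Finset.mul_sum]
    exact Finset.sum_congr rfl fun m _ => by ring
  -- split off m = 0 and m = k
  rw [Finset.range_eq_Ico, Finset.sum_eq_sum_Ico_succ_bot (by omega),
    Finset.sum_Ico_succ_top (by omega)] at hc2
  simp only [Nat.cast_zero, Nat.sub_zero, Nat.zero_mul, Nat.sub_self, zero_mul,
    mul_zero, zero_add, h1, pow_zero, one_mul, mul_one] at hc2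
  -- now hc2 : A_k = (-n)^k * A_k + (Σ_{Ico 1 k} ...) + (n*k+1)*A_k
  apply mul_left_cancel₀ hnn0
  rw [Finset.mul_sum]
  have hkpow : -(n:ℂ) * (-(n:ℂ))^(k-1) = (-(n:ℂ))^k := by
    rw [← pow_succ']
    congr 1
    omega
  have hsum2 : ∑ m ∈ Ico 1 k, -(n:ℂ) * (((n : ℂ) * (m : ℂ) + 1) * (-(n : ℂ)) ^ (k - m - 1) *
          coeff (m * n + 1) f * coeff ((k - m) * n + 1) f)
      = ∑ m ∈ Ico 1 k, ((n : ℂ) * m + 1) * (-(n:ℂ))^(k - m)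
          * coeff (m*n+1) f * coeff ((k-m)*n+1) f := by
    apply Finset.sum_congr rfl
    intro m hm
    rw [Finset.mem_Ico] at hm
    have : -(n:ℂ) * (-(n:ℂ))^(k-m-1) = (-(n:ℂ))^(k-m) := by
      rw [← pow_succ']
      congr 1
      omega
    rw [← this]
    ring
  rw [hsum2]
  have : -(n:ℂ) * (((k:ℂ) - (-(n : ℂ)) ^ (k - 1)) * coeff (k * n + 1) f)
      = (1 - (-(n:ℂ))^k - ((n:ℂ)*k+1)) * coeff (k*n+1) f := by
    rw [← hkpow]; ring
  rw [this]
  -- conclude from hc2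
  linear_combination hc2
end

section
/- Let n ≥ 1 be a natural number and p ∈ ℂ with pⁿ = −n. Let f ∈ X + X²ℂ[[X]] satisfy p·f = f'·(f∘(pX)) and suppose coeff_k f = 0 for every k ≥ 2 with k ≢ 1 (mod n). Let B ∈ ℂ[[X]] be the unique power series with f·B = X (it exists since f/X is a unit), so B represents X/f. Then coeff_j B = 0 whenever n does not divide j; and setting B_k := coeff_{nk} B, one has B₀ = 1, B₁ = −coeff_{n+1} f, and for every k ≥ 1: (k − (−n)^{k−1})·B_k = Σ_{m=1}^{k−1} (−n)^{m−1}·B_m·B_{k−m}. -/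
open PowerSeries Finset

/-- **Proposition 1.4.** Let `n ≥ 1`, `pⁿ = -n`, let `f ∈ X + X²ℂ[[X]]` satisfy
`p·f = f'·(f∘(pX))` with `coeff_k f = 0` for `k ≥ 2`, `k ≢ 1 (mod n)`,
and let `B ∈ ℂ[[X]]` be the series with `f·B = X` (so `B = X/f`).  Then
`coeff_j B = 0` whenever `n ∤ j`, and writing `B_k := coeff_{nk} B` one has
`B₀ = 1`, `B₁ = -coeff_{n+1} f`, and for every `k ≥ 1`
`(k − (−n)^{k−1})·B_k = Σ_{m=1}^{k−1} (−n)^{m−1}·B_m·B_{k−m}`. -/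
theorem statement3 (n : ℕ) (hn : 1 ≤ n) (p : ℂ) (hp : p ^ n = -(n : ℂ))
    (f : PowerSeries ℂ)
    (h0 : coeff 0 f = 0) (h1 : coeff 1 f = 1)
    (heq : C p * f = (d⁄dX ℂ f) * rescale p f)
    (hvan : ∀ k, 2 ≤ k → ¬ (k ≡ 1 [MOD n]) → coeff k f = 0)
    (B : PowerSeries ℂ) (hB : f * B = X) :
    (∀ j : ℕ, ¬ (n ∣ j) → coeff j B = 0) ∧
    coeff 0 B = 1 ∧
    coeff n B = -coeff (n + 1) f ∧
    ∀ k : ℕ, 1 ≤ k →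
      ((k : ℂ) - (-(n : ℂ)) ^ (k - 1)) * coeff (n * k) B =
        ∑ m ∈ Ico 1 k, (-(n : ℂ)) ^ (m - 1) * coeff (n * m) B * coeff (n * (k - m)) B := by
  have hn0 : (n : ℂ) ≠ 0 := Nat.cast_ne_zero.mpr (by omega)
  have hp0 : p ≠ 0 := by
    intro h
    rw [h, zero_pow (by omega), eq_comm, neg_eq_zero] at hp
    exact hn0 hp
  -- B₀ = 1
  have hB0 : coeff 0 B = 1 := by
    have h := congrArg (coeff 1) hB
    rw [coeff_mul, Finset.Nat.sum_antidiagonal_eq_sum_range_succ_mk] at h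
    simpa [Finset.sum_range_succ, h0, h1] using h
  -- vanishing of B off multiples of n
  have hvanB : ∀ j : ℕ, ¬ (n ∣ j) → coeff j B = 0 := by
    intro j
    induction j using Nat.strong_induction_on with
    | _ j ih =>
      intro hj
      have hj1 : 1 ≤ j := by
        rcases Nat.eq_zero_or_pos j with h | h
        · exact absurd (h ▸ dvd_zero n) hj
        · exact h
      have h := congrArg (coeff (j + 1)) hB
      rw [coeff_mul, Finset.Nat.sum_antidiagonal_eq_sum_range_succ_mk, coeff_X,
        if_neg (by omega)] at h
      have hsum : ∑ i ∈ range (j + 2), coeff i f * coeff (j + 1 - i) B = coeff j B := by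
        rw [Finset.sum_eq_single 1]
        · simp [h1]
        · intro i hi hi1
          rcases Nat.lt_or_ge i 2 with h2 | h2
          · interval_cases i
            · simp [h0]
            · omega
          · by_cases hmod : i ≡ 1 [MOD n]
            · have hd : n ∣ i - 1 := (Nat.modEq_iff_dvd' (by omega)).mp hmod.symm
              have hnd : ¬ n ∣ (j + 1 - i) := by
                intro hd2
                apply hj
                have : j = (j + 1 - i) + (i - 1) := by
                  simp only [mem_range] at hi; omega
                rw [this]
                exact Nat.dvd_add hd2 hd
              rw [ih (j + 1 - i) (by omega) hnd, mul_zero]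
            · rw [hvan i h2 hmod, zero_mul]
        · intro h; simp at h
      rw [hsum] at h
      exact h
  refine ⟨hvanB, hB0, ?_, ?_⟩
  -- B₁ = -coeff_{n+1} f
  · have h := congrArg (coeff (n + 1)) hB
    rw [coeff_mul, Finset.Nat.sum_antidiagonal_eq_sum_range_succ_mk, coeff_X,
      if_neg (by omega), Finset.sum_range_succ] at h
    have hsum : ∑ i ∈ range (n + 1), coeff i f * coeff (n + 1 - i) B = coeff n B := by
      rw [Finset.sum_eq_single 1]
      · simp [h1]
      · intro i hi hi1
        rcases Nat.lt_or_ge i 2 with h2 | h2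
        · interval_cases i
          · simp [h0]
          · omega
        · have hnd : ¬ n ∣ (n + 1 - i) := by
            simp only [mem_range] at hi
            intro hd
            rcases hd with ⟨c, hc⟩
            rcases Nat.eq_zero_or_pos c with h | h
            · subst h; omega
            · have h3 : n ≤ n * c := Nat.le_mul_of_pos_right n h
              omega
          rw [hvanB _ hnd, mul_zero]
      · intro h; exact absurd (Finset.mem_range.mpr (by omega)) h
    rw [hsum] at h
    simp only [Nat.sub_self, hB0] at h
    linear_combination h
  -- the recurrence
  · intro k hk
    -- rescale p B = f' * B
    have hCX : (C p * X : PowerSeries ℂ) ≠ 0 := by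
      intro h
      have := congrArg (coeff 1) h
      simp [coeff_C_mul, coeff_X] at this
      exact hp0 this
    have key : rescale p B = (d⁄dX ℂ f) * B := by
      apply mul_left_cancel₀ hCX
      calc C p * X * rescale p B
          = (C p * (f * B)) * rescale p B := by rw [hB]
        _ = ((d⁄dX ℂ f * rescale p f) * B) * rescale p B := by
            rw [← mul_assoc (C p) f B, heq]
        _ = (d⁄dX ℂ f * B) * (rescale p f * rescale p B) := by ring
        _ = (d⁄dX ℂ f * B) * rescale p (f * B) := by rw [map_mul]
        _ = (d⁄dX ℂ f * B) * (C p * X) := by rw [hB, rescale_X]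
        _ = C p * X * (d⁄dX ℂ f * B) := by ring
    have hder : f * d⁄dX ℂ B + B * d⁄dX ℂ f = 1 := by
      have h := congrArg (d⁄dX ℂ) hB
      rwa [Derivation.leibniz, smul_eq_mul, smul_eq_mul, derivative_X] at h
    have hmain : B * rescale p B = B - X * d⁄dX ℂ B := by
      rw [key]
      calc B * (d⁄dX ℂ f * B)
          = (f * d⁄dX ℂ B + B * d⁄dX ℂ f) * B - (f * B) * d⁄dX ℂ B := by ring
        _ = B - X * d⁄dX ℂ B := by rw [hder, hB, one_mul]
    -- coefficient extraction at n*k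
    have hnk1 : 1 ≤ n * k := by
      calc 1 = 1 * 1 := by norm_num
      _ ≤ n * k := Nat.mul_le_mul hn hk
    have hco := congrArg (coeff (n * k)) hmain
    rw [coeff_mul, Finset.Nat.sum_antidiagonal_eq_sum_range_succ_mk] at hco
    -- right-hand side
    have hrhs : coeff (n * k) (B - X * d⁄dX ℂ B)
        = coeff (n * k) B * (1 - (n * k : ℕ)) := by
      have hx : n * k = (n * k - 1) + 1 := by omega
      rw [map_sub, hx, coeff_succ_X_mul, coeff_derivative]
      push_cast
      rw [← hx]
      have : ((n * k - 1 : ℕ) : ℂ) + 1 = (n * k : ℕ) := by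
        push_cast [Nat.cast_sub hnk1]; ring
      rw [this]
      ring
    -- left-hand side: restrict to multiples of n
    set g : ℕ → ℂ := fun i => coeff i B * coeff (n * k - i) (rescale p B) with hg
    have hgz : ∀ i ∈ range (n * k + 1), g i ≠ 0 → n ∣ i := by
      intro i _ hgi
      by_contra hnd
      exact hgi (by simp [hg, hvanB i hnd])
    have himg : (range (n * k + 1)).filter (fun i => n ∣ i) = (range (k + 1)).image (n * ·) := by
      ext i
      simp only [mem_filter, mem_range, mem_image]
      constructor
      · rintro ⟨hlt, c, rfl⟩
        refine ⟨c, ?_, rfl⟩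
        by_contra hc
        have : n * (k + 1) ≤ n * c := Nat.mul_le_mul_left n (by omega)
        have : n * k + n ≤ n * c := by rw [Nat.mul_add, mul_one] at this; omega
        omega
      · rintro ⟨m, hm, rfl⟩
        refine ⟨?_, m, rfl⟩
        have : n * m ≤ n * k := Nat.mul_le_mul_left n (by omega)
        omega
    have hsum1 : ∑ i ∈ range (n * k + 1), g i = ∑ m ∈ range (k + 1), g (n * m) := by
      rw [← Finset.sum_filter_of_ne hgz, himg, Finset.sum_image]
      intro a _ b _ h
      exact Nat.eq_of_mul_eq_mul_left (by omega) h
    have hgnm : ∀ m ∈ range (k + 1),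
        g (n * m) = coeff (n * m) B * ((-(n : ℂ)) ^ (k - m) * coeff (n * (k - m)) B) := by
      intro m hm
      simp only [mem_range] at hm
      have hsub : n * k - n * m = n * (k - m) := by
        rw [Nat.mul_sub]
      rw [hg]
      simp only
      rw [hsub, coeff_rescale, pow_mul, hp]
    set b : ℕ → ℂ := fun m => coeff (n * m) B with hbdef
    have hsum2 : ∑ m ∈ range (k + 1), g (n * m)
        = ∑ m ∈ range (k + 1), b m * ((-(n : ℂ)) ^ (k - m) * b (k - m)) :=
      Finset.sum_congr rfl hgnm
    -- combine
    have hEq : ∑ m ∈ range (k + 1), b m * ((-(n : ℂ)) ^ (k - m) * b (k - m))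
        = b k * (1 - (n * k : ℕ)) := by
      rw [← hsum2, ← hsum1, hco, hrhs]
    -- peel off m = 0 and m = k
    have hb0 : b 0 = 1 := by simpa [hbdef] using hB0
    rw [Finset.range_eq_Ico, Finset.sum_eq_sum_Ico_succ_bot (by omega),
      Finset.sum_Ico_succ_top (by omega)] at hEq
    simp only [Nat.sub_zero, Nat.sub_self, pow_zero, hb0, one_mul, mul_one] at hEq
    -- hEq : (-n)^k * b k + (∑ m ∈ Ico 1 k, b m * ((-n)^(k-m) * b (k-m))) + b k = b k * (1 - n*k)
    -- reflect the sum
    have hrefl : ∑ m ∈ Ico 1 k, b m * ((-(n : ℂ)) ^ (k - m) * b (k - m))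
        = ∑ m ∈ Ico 1 k, (-(n : ℂ)) ^ m * b m * b (k - m) := by
      rw [Finset.sum_nbij' (i := fun m => k - m) (j := fun m => k - m)]
      · intro m hm; simp only [mem_Ico] at hm ⊢; omega
      · intro m hm; simp only [mem_Ico] at hm ⊢; omega
      · intro m hm; simp only [mem_Ico] at hm; omega
      · intro m hm; simp only [mem_Ico] at hm; omega
      · intro m hm
        simp only [mem_Ico] at hm
        have : k - (k - m) = m := by omega
        rw [this]
        ring
    have hfactor : ∑ m ∈ Ico 1 k, (-(n : ℂ)) ^ m * b m * b (k - m)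
        = (-(n : ℂ)) * ∑ m ∈ Ico 1 k, (-(n : ℂ)) ^ (m - 1) * b m * b (k - m) := by
      rw [Finset.mul_sum]
      apply Finset.sum_congr rfl
      intro m hm
      simp only [mem_Ico] at hm
      have hpow : (-(n : ℂ)) ^ m = (-(n : ℂ)) * (-(n : ℂ)) ^ (m - 1) := by
        conv_lhs => rw [show m = (m - 1) + 1 by omega]
        rw [pow_succ]
        ring
      rw [hpow]; ring
    have hpowk : (-(n : ℂ)) ^ k = (-(n : ℂ)) * (-(n : ℂ)) ^ (k - 1) := by
      conv_lhs => rw [show k = (k - 1) + 1 by omega]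
      rw [pow_succ]
      ring
    apply mul_left_cancel₀ (neg_ne_zero.mpr hn0 : (-(n : ℂ)) ≠ 0)
    rw [← hfactor, ← hrefl]
    have hcast : ((n * k : ℕ) : ℂ) = (n : ℂ) * k := by push_cast; ring
    rw [hcast] at hEq
    -- goal : -n * ((k - (-n)^(k-1)) * b k) = ∑ ...
    simp only [zero_add] at hEq
    have : (∑ m ∈ Ico 1 k, b m * ((-(n : ℂ)) ^ (k - m) * b (k - m)))
        = b k * (1 - (n : ℂ) * k) - (-(n : ℂ)) ^ k * b k - b k := by
      linear_combination hEq
    rw [this, hpowk]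
    ring
end

section
/- Let f ∈ X + X²ℂ[[X]] and let g := 𝔗f, i.e. g ∈ X + X²ℂ[[X]] with g·f' = f. Let φ ∈ X + X²ℂ[[X]] be the compositional inverse of f (f∘φ = X). Let u ∈ ℂ[[X]] satisfy coeff_0 u = 0 and X·u' = φ (so u = ∫₀^x φ(t)/t dt), and let v ∈ ℂ[[X]] satisfy coeff_0 v = 0 and g·v' = X (so v = ∫₀^x t/g(t) dt). Let w ∈ X + X²ℂ[[X]] be the compositional inverse of u (u∘w = X). Then 𝔗w = w/w' is the compositional inverse of v, i.e. v∘(w/w') = X. (In the paper's notation: the operator Q𝔗Q, where Q denotes compositional inversion, sends ∫₀^x f^{inv}(t)/t dt to ∫₀^x t/(𝔗f)(t) dt.) -/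
open PowerSeries Finset

/-- Composition `f ∘ g` of formal power series (intended for `g` with zero constant
term, in which case `coeff_n (f ∘ g) = Σ_{k=0}^{n} coeff_k f · coeff_n (gᵏ)`). -/
noncomputable def pcomp (f g : PowerSeries ℂ) : PowerSeries ℂ :=
  PowerSeries.mk fun n => ∑ k ∈ range (n + 1), coeff k f * coeff n (g ^ k)

lemma coeff_pow_zero_of_lt {c : PowerSeries ℂ} (hc : coeff 0 c = 0) {n k : ℕ} (h : n < k) :
    coeff n (c ^ k) = 0 := by
  have : (X : PowerSeries ℂ) ^ k ∣ c ^ k :=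
    pow_dvd_pow_of_dvd (X_dvd_iff.2 (by rwa [← coeff_zero_eq_constantCoeff])) k
  exact (X_pow_dvd_iff.1 this) n h

lemma coeff_pcomp (a c : PowerSeries ℂ) (n : ℕ) :
    coeff n (pcomp a c) = ∑ k ∈ range (n+1), coeff k a * coeff n (c ^ k) := by
  simp [pcomp]

lemma coeff_pcomp_eq {c : PowerSeries ℂ} (hc : coeff 0 c = 0) (a : PowerSeries ℂ)
    {n N : ℕ} (h : n < N) :
    coeff n (pcomp a c) = coeff n (∑ k ∈ range N, C (coeff k a) * c ^ k) := by
  rw [coeff_pcomp, map_sum]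
  simp only [coeff_C_mul]
  refine (Finset.sum_subset (f := fun k => coeff k a * coeff n (c ^ k))
    (Finset.range_subset_range.2 h) ?_)
  intro k _ hk
  rw [coeff_pow_zero_of_lt hc (by simpa using hk), mul_zero]

lemma constantCoeff_pcomp (a c : PowerSeries ℂ) :
    coeff 0 (pcomp a c) = coeff 0 a := by
  simp [coeff_pcomp]

lemma pcomp_X {c : PowerSeries ℂ} (hc : coeff 0 c = 0) : pcomp X c = c := by
  ext n
  rw [coeff_pcomp_eq hc X (Nat.lt_succ_of_le (Nat.le_succ n))]
  simp [coeff_X]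

lemma coeff_aeval {c : PowerSeries ℂ} (hc : coeff 0 c = 0) (p : Polynomial ℂ) (n : ℕ) :
    coeff n (Polynomial.aeval c p) = ∑ k ∈ range (n+1), p.coeff k * coeff n (c ^ k) := by
  have hd : p.natDegree < max (p.natDegree + 1) (n + 1) :=
    lt_of_lt_of_le (Nat.lt_succ_self _) (le_max_left _ _)
  rw [Polynomial.aeval_eq_sum_range' hd, map_sum]
  simp only [smul_eq_C_mul, coeff_C_mul]
  refine (Finset.sum_subset (f := fun k => p.coeff k * coeff n (c ^ k))
      (Finset.range_subset_range.2 (le_max_right _ _)) ?_).symm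
  intro k _ hk
  rw [coeff_pow_zero_of_lt hc (by simpa using hk), mul_zero]

lemma coeff_pcomp_aeval {c : PowerSeries ℂ} (hc : coeff 0 c = 0) (a : PowerSeries ℂ)
    {n N : ℕ} (h : n < N) :
    coeff n (pcomp a c) = coeff n (Polynomial.aeval c (trunc N a)) := by
  rw [coeff_aeval hc, coeff_pcomp]
  refine Finset.sum_congr rfl ?_
  intro k hk
  rw [coeff_trunc]
  rw [if_pos (lt_of_lt_of_le (by simpa using hk) h)]

lemma pcomp_mul {c : PowerSeries ℂ} (hc : coeff 0 c = 0) (a b : PowerSeries ℂ) :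
    pcomp (a * b) c = pcomp a c * pcomp b c := by
  ext n
  rw [coeff_pcomp_aeval hc (a*b) (Nat.lt_succ_self n), coeff_mul]
  have h1 : ∀ p ∈ antidiagonal n, coeff p.1 (pcomp a c) * coeff p.2 (pcomp b c)
      = coeff p.1 (Polynomial.aeval c (trunc (n+1) a) : PowerSeries ℂ)
        * coeff p.2 (Polynomial.aeval c (trunc (n+1) b)) := by
    intro p hp
    rw [Finset.HasAntidiagonal.mem_antidiagonal] at hp
    rw [coeff_pcomp_aeval hc a (Nat.lt_succ_of_le (hp ▸ Nat.le_add_right _ _)),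
        coeff_pcomp_aeval hc b (Nat.lt_succ_of_le (hp ▸ Nat.le_add_left _ _))]
  rw [Finset.sum_congr rfl h1, ← coeff_mul, ← map_mul]
  rw [coeff_aeval hc, coeff_aeval hc]
  refine Finset.sum_congr rfl ?_
  intro k hk
  congr 1
  have hk' : k < n + 1 := by simpa using hk
  rw [coeff_trunc, if_pos hk', coeff_mul_eq_coeff_trunc_mul_trunc a b hk',
      ← Polynomial.coeff_coe, Polynomial.coe_mul]

lemma pcomp_one (c : PowerSeries ℂ) : pcomp 1 c = 1 := by
  ext n
  rw [coeff_pcomp]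
  rcases Nat.eq_zero_or_pos n with h | h
  · subst h; simp
  · rw [Finset.sum_eq_single 0]
    · simp [coeff_one, Nat.pos_iff_ne_zero.1 h]
    · intro k _ hk; simp [coeff_one, hk]
    · simp
  
lemma pcomp_pow {c : PowerSeries ℂ} (hc : coeff 0 c = 0) (b : PowerSeries ℂ) (k : ℕ) :
    pcomp (b ^ k) c = (pcomp b c) ^ k := by
  induction k with
  | zero => simpa using pcomp_one c
  | succ k ih => rw [pow_succ, pow_succ, pcomp_mul hc, ih]

lemma constantCoeff_pcomp' (a c : PowerSeries ℂ) :
    constantCoeff (pcomp a c) = coeff 0 a := by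
  rw [← coeff_zero_eq_constantCoeff]; exact constantCoeff_pcomp a c

lemma pcomp_assoc {b c : PowerSeries ℂ} (hb : coeff 0 b = 0) (hc : coeff 0 c = 0)
    (a : PowerSeries ℂ) :
    pcomp (pcomp a b) c = pcomp a (pcomp b c) := by
  have hbc : coeff 0 (pcomp b c) = 0 := by rw [constantCoeff_pcomp, hb]
  ext n
  rw [coeff_pcomp, coeff_pcomp]
  have h1 : ∀ k ∈ range (n+1), coeff k a * coeff n ((pcomp b c) ^ k)
      = ∑ j ∈ range (n+1), coeff k a * (coeff j (b ^ k) * coeff n (c ^ j)) := by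
    intro k _
    rw [← pcomp_pow hc, coeff_pcomp, Finset.mul_sum]
  rw [Finset.sum_congr rfl h1, Finset.sum_comm]
  refine Finset.sum_congr rfl ?_
  intro j hj
  rw [coeff_pcomp, Finset.sum_mul]
  have hsub : range (j+1) ⊆ range (n+1) :=
    Finset.range_subset_range.2 (Nat.succ_le_succ (Nat.lt_succ_iff.1 (by simpa using hj)))
  rw [Finset.sum_subset (f := fun k => coeff k a * coeff j (b ^ k) * coeff n (c ^ j)) hsub
    (by intro k _ hk
        rw [coeff_pow_zero_of_lt hb (by simpa using hk), mul_zero, zero_mul])]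
  exact Finset.sum_congr rfl fun k _ => by ring

lemma derivative_pcomp {c : PowerSeries ℂ} (hc : coeff 0 c = 0) (a : PowerSeries ℂ) :
    d⁄dX ℂ (pcomp a c) = pcomp (d⁄dX ℂ a) c * d⁄dX ℂ c := by
  ext n
  have key : d⁄dX ℂ (∑ k ∈ range (n+2), C (coeff k a) * c ^ k)
      = (∑ k ∈ range (n+1), C (coeff k (d⁄dX ℂ a)) * c ^ k) * d⁄dX ℂ c := by
    rw [map_sum, Finset.sum_mul, Finset.sum_range_succ']
    have h0 : d⁄dX ℂ (C (coeff 0 a) * c ^ 0) = 0 := by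
      simp
    rw [h0, add_zero]
    refine Finset.sum_congr rfl ?_
    intro k _
    rw [Derivation.leibniz, Derivation.leibniz_pow, derivative_C, smul_zero, add_zero,
        coeff_derivative]
    simp only [Nat.add_sub_cancel, smul_eq_mul, nsmul_eq_mul, map_mul, map_natCast]
    push_cast [map_add, map_one, map_natCast]
    ring
  calc coeff n (d⁄dX ℂ (pcomp a c))
      = coeff (n+1) (pcomp a c) * (n+1) := coeff_derivative _ n
    _ = coeff (n+1) (∑ k ∈ range (n+2), C (coeff k a) * c ^ k) * (n+1) := by
        rw [coeff_pcomp_eq hc a (Nat.lt_succ_self (n+1))]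
    _ = coeff n (d⁄dX ℂ (∑ k ∈ range (n+2), C (coeff k a) * c ^ k)) :=
        (coeff_derivative _ n).symm
    _ = coeff n ((∑ k ∈ range (n+1), C (coeff k (d⁄dX ℂ a)) * c ^ k) * d⁄dX ℂ c) := by
        rw [key]
    _ = coeff n (pcomp (d⁄dX ℂ a) c * d⁄dX ℂ c) := by
        rw [coeff_mul, coeff_mul]
        refine Finset.sum_congr rfl ?_
        intro p hp
        rw [Finset.HasAntidiagonal.mem_antidiagonal] at hp
        rw [← coeff_pcomp_eq hc (d⁄dX ℂ a) (Nat.lt_succ_of_le (hp ▸ Nat.le_add_right _ _))]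

/-- **Observation 1.1.** Let `f ∈ X + X²ℂ[[X]]`, `g = 𝔗f` (so `g·f' = f`), let `φ`
be the compositional inverse of `f`, let `u = ∫₀ˣ φ(t)/t dt` (i.e. `X·u' = φ`,
`u(0)=0`), let `v = ∫₀ˣ t/g(t) dt` (i.e. `g·v' = X`, `v(0)=0`), and let `w` be the
compositional inverse of `u`.  Then `𝔗w = w/w'` is the compositional inverse of
`v`: in the paper's notation, `Q𝔗Q` sends `∫₀ˣ f^{inv}(t)/t dt` to `∫₀ˣ t/(𝔗f)(t) dt`. -/
theorem statement4 (f g φ u v w Tw : PowerSeries ℂ)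
    (hf0 : coeff 0 f = 0) (hf1 : coeff 1 f = 1)
    (hg0 : coeff 0 g = 0) (hg1 : coeff 1 g = 1)
    (hg : g * d⁄dX ℂ f = f)
    (hφ0 : coeff 0 φ = 0) (hφ1 : coeff 1 φ = 1)
    (hφ : pcomp f φ = X)
    (hu0 : coeff 0 u = 0) (hu : X * d⁄dX ℂ u = φ)
    (hv0 : coeff 0 v = 0) (hv : g * d⁄dX ℂ v = X)
    (hw0 : coeff 0 w = 0) (hw1 : coeff 1 w = 1)
    (hw : pcomp u w = X)
    (hTw : Tw * d⁄dX ℂ w = w) :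
    pcomp v Tw = X := by
  have hDw0 : coeff 0 (d⁄dX ℂ w) = 1 := by
    rw [coeff_derivative]; simpa using hw1
  have hDwne : (d⁄dX ℂ w) ≠ 0 := fun h => by simp [h] at hDw0
  have hTw0 : coeff 0 Tw = 0 := by
    have h := congrArg (coeff 0) hTw
    rw [coeff_mul, show antidiagonal 0 = {(0,0)} from rfl, Finset.sum_singleton] at h
    simpa [hDw0, hw0] using h
  -- Step A
  have hA : pcomp (d⁄dX ℂ f) φ * d⁄dX ℂ φ = 1 := by
    have := congrArg (d⁄dX ℂ) hφ
    rwa [derivative_pcomp hφ0, derivative_X] at this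
  -- Step B,C
  have hC : pcomp g φ = X * d⁄dX ℂ φ := by
    have hB : pcomp g φ * pcomp (d⁄dX ℂ f) φ = X := by
      rw [← pcomp_mul hφ0, hg, hφ]
    calc pcomp g φ = pcomp g φ * (pcomp (d⁄dX ℂ f) φ * d⁄dX ℂ φ) := by rw [hA, mul_one]
      _ = (pcomp g φ * pcomp (d⁄dX ℂ f) φ) * d⁄dX ℂ φ := by ring
      _ = X * d⁄dX ℂ φ := by rw [hB]
  -- Step D
  have hD : pcomp (d⁄dX ℂ u) w * d⁄dX ℂ w = 1 := by
    have := congrArg (d⁄dX ℂ) hw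
    rwa [derivative_pcomp hw0, derivative_X] at this
  -- Step E
  have hE : w * pcomp (d⁄dX ℂ u) w = pcomp φ w := by
    have := congrArg (fun z => pcomp z w) hu
    simpa [pcomp_mul hw0, pcomp_X hw0] using this
  -- Step F
  have hF : Tw = pcomp φ w := by
    have h2 : pcomp φ w * d⁄dX ℂ w = w := by
      rw [← hE]
      calc w * pcomp (d⁄dX ℂ u) w * d⁄dX ℂ w
          = w * (pcomp (d⁄dX ℂ u) w * d⁄dX ℂ w) := by ring
        _ = w := by rw [hD, mul_one]
    exact mul_right_cancel₀ hDwne (by rw [hTw, h2])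
  -- Step G
  have hG : pcomp g Tw = w * pcomp (d⁄dX ℂ φ) w := by
    rw [hF, ← pcomp_assoc hφ0 hw0, hC, pcomp_mul hw0, pcomp_X hw0]
  -- Step H
  have hH : d⁄dX ℂ Tw = pcomp (d⁄dX ℂ φ) w * d⁄dX ℂ w := by
    rw [hF, derivative_pcomp hw0]
  -- Step I
  have hI : Tw * d⁄dX ℂ Tw = pcomp g Tw := by
    calc Tw * d⁄dX ℂ Tw = (Tw * d⁄dX ℂ w) * pcomp (d⁄dX ℂ φ) w := by rw [hH]; ring
      _ = w * pcomp (d⁄dX ℂ φ) w := by rw [hTw]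
      _ = pcomp g Tw := hG.symm
  -- Step J
  have hJ : pcomp g Tw * pcomp (d⁄dX ℂ v) Tw = Tw := by
    have := congrArg (fun z => pcomp z Tw) hv
    simpa [pcomp_mul hTw0, pcomp_X hTw0] using this
  -- Step M
  have hM : pcomp g Tw ≠ 0 := by
    have hTw1 : coeff 1 Tw = 1 := by
      have := congrArg (coeff 1) hTw
      rw [coeff_mul] at this
      rw [show antidiagonal 1 = {(0,1),(1,0)} from rfl] at this
      rw [Finset.sum_insert (by decide), Finset.sum_singleton] at this
      simp only [] at this
      rw [hTw0] at this
      simpa [hDw0, hw1] using this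
    have h1 : coeff 1 (pcomp g Tw) = 1 := by
      rw [coeff_pcomp]
      rw [show range 2 = {0, 1} from rfl]
      simp [hg0, hg1, hTw1]
    intro h; rw [h] at h1; simp at h1
  -- Step N
  have hK : d⁄dX ℂ (pcomp v Tw) = pcomp (d⁄dX ℂ v) Tw * d⁄dX ℂ Tw :=
    derivative_pcomp hTw0 v
  have hL : pcomp g Tw * d⁄dX ℂ (pcomp v Tw) = pcomp g Tw * 1 := by
    calc pcomp g Tw * d⁄dX ℂ (pcomp v Tw)
        = (pcomp g Tw * pcomp (d⁄dX ℂ v) Tw) * d⁄dX ℂ Tw := by rw [hK]; ring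
      _ = Tw * d⁄dX ℂ Tw := by rw [hJ]
      _ = pcomp g Tw * 1 := by rw [mul_one]; exact hI
  have hN : d⁄dX ℂ (pcomp v Tw) = 1 := mul_left_cancel₀ hM hL
  refine PowerSeries.derivative.ext ?_ ?_
  · rw [hN, derivative_X]
  · rw [← coeff_zero_eq_constantCoeff, constantCoeff_pcomp, hv0,
        coeff_zero_eq_constantCoeff, constantCoeff_X]
end

section
/- Let f ∈ X + X²ℂ[[X]] satisfy 2·f·f' = (f∘(2X))·((f')² − f·f'') (equivalently, 𝔗²f(X) = f(2X)/2). Then f∘(−X) = −f, i.e. f is odd: coeff_k f = 0 for every even k. -/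
open PowerSeries
open Finset

private lemma nat_ne (M : ℕ) (hM : M % 2 = 0) : (2 * (M + 1) ^ 2 : ℕ) ≠ 2 ^ (M + 2) := by
  intro h
  have h1 : (M + 1) ^ 2 % 2 = 1 := by
    rw [Nat.pow_mod]
    have : (M + 1) % 2 = 1 := by omega
    rw [this]
  have h2 : 2 ^ (M + 2) % 4 = 0 := by
    have : 2 ^ (M + 2) = 4 * 2 ^ M := by ring
    omega
  omega

private lemma even_coeff (f : PowerSeries ℂ)
    (h0 : coeff 0 f = 0) (h1 : coeff 1 f = 1)
    (heq : 2 * f * d⁄dX ℂ f =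
      rescale 2 f * ((d⁄dX ℂ f) ^ 2 - f * d⁄dX ℂ (d⁄dX ℂ f))) :
    ∀ k : ℕ, k % 2 = 0 → coeff k f = 0 := by
  intro k
  induction k using Nat.strong_induction_on with
  | _ N ih =>
    intro hNe
    rcases Nat.eq_zero_or_pos N with rfl | hNpos
    · exact h0
    obtain ⟨M, rfl⟩ : ∃ M, N = M + 2 := ⟨N - 2, by omega⟩
    have hM : M % 2 = 0 := by omega
    -- left-hand side coefficient
    have hS : coeff (M+2) (f * d⁄dX ℂ f) = ((M:ℂ) + 3) * coeff (M+2) f := by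
      rw [coeff_mul]
      have hsub : ({(1, M+1), (M+2, 0)} : Finset (ℕ×ℕ)) ⊆ antidiagonal (M+2) := by
        intro p hp
        simp only [mem_insert, mem_singleton] at hp
        rcases hp with rfl | rfl <;> simp [HasAntidiagonal.mem_antidiagonal] <;> omega
      rw [← Finset.sum_subset hsub ?_]
      · rw [Finset.sum_insert (by simp), Finset.sum_singleton]
        simp only [coeff_derivative, h1]
        push_cast
        ring
      · intro p hp hps
        obtain ⟨i, j⟩ := p
        simp only [HasAntidiagonal.mem_antidiagonal] at hp
        simp only [mem_insert, mem_singleton, Prod.mk.injEq, not_or] at hps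
        rw [coeff_derivative]
        rcases Nat.even_or_odd i with hi | hi
        · rw [Nat.even_iff] at hi
          have : coeff i f = 0 := ih i (by omega) hi
          simp [this]
        · rw [Nat.odd_iff] at hi
          have : coeff (j+1) f = 0 := ih (j+1) (by omega) (by omega)
          simp [this]
    have hL : coeff (M+2) (2 * f * d⁄dX ℂ f) = 2 * ((M:ℂ) + 3) * coeff (M+2) f := by
      rw [two_mul, add_mul, map_add, hS]; ring
    -- second factor on the right
    set B : PowerSeries ℂ := (d⁄dX ℂ f) ^ 2 - f * d⁄dX ℂ (d⁄dX ℂ f) with hBdef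
    have hB0 : coeff 0 B = 1 := by
      rw [hBdef, map_sub, pow_two, coeff_mul, coeff_mul, Finset.Nat.antidiagonal_zero,
        Finset.sum_singleton, Finset.sum_singleton]
      simp only [coeff_derivative, zero_add, h0, h1]
      norm_num
    have hBodd : ∀ m, m % 2 = 1 → m < M + 1 → coeff m B = 0 := by
      intro m hm hmlt
      rw [hBdef, map_sub, pow_two, coeff_mul, coeff_mul]
      rw [Finset.sum_eq_zero ?_, Finset.sum_eq_zero ?_, sub_zero]
      · intro p hp
        obtain ⟨i, j⟩ := p
        simp only [HasAntidiagonal.mem_antidiagonal] at hp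
        simp only [coeff_derivative]
        rcases Nat.even_or_odd i with hi | hi
        · rw [Nat.even_iff] at hi
          have : coeff i f = 0 := ih i (by omega) hi
          simp [this]
        · rw [Nat.odd_iff] at hi
          have : coeff (j+2) f = 0 := ih (j+2) (by omega) (by omega)
          simp [this]
      · intro p hp
        obtain ⟨i, j⟩ := p
        simp only [HasAntidiagonal.mem_antidiagonal] at hp
        simp only [coeff_derivative]
        rcases Nat.even_or_odd i with hi | hi
        · rw [Nat.even_iff] at hi
          have : coeff (j+1) f = 0 := ih (j+1) (by omega) (by omega)
          simp [this]
        · rw [Nat.odd_iff] at hi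
          have : coeff (i+1) f = 0 := ih (i+1) (by omega) (by omega)
          simp [this]
    have hBtop : coeff (M+1) B = ((M:ℂ)+2) * (1 - (M:ℂ)) * coeff (M+2) f := by
      have hA : coeff (M+1) ((d⁄dX ℂ f) ^ 2) = 2 * ((M:ℂ)+2) * coeff (M+2) f := by
        rw [pow_two, coeff_mul]
        have hsub : ({(M+1, 0), (0, M+1)} : Finset (ℕ×ℕ)) ⊆ antidiagonal (M+1) := by
          intro p hp
          simp only [mem_insert, mem_singleton] at hp
          rcases hp with rfl | rfl <;> simp [HasAntidiagonal.mem_antidiagonal] <;> omega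
        rw [← Finset.sum_subset hsub ?_]
        · rw [Finset.sum_insert (by simp), Finset.sum_singleton]
          simp only [coeff_derivative, h1]
          push_cast
          ring
        · intro p hp hps
          obtain ⟨i, j⟩ := p
          simp only [HasAntidiagonal.mem_antidiagonal] at hp
          simp only [mem_insert, mem_singleton, Prod.mk.injEq, not_or] at hps
          simp only [coeff_derivative]
          rcases Nat.even_or_odd i with hi | hi
          · rw [Nat.even_iff] at hi
            have : coeff (j+1) f = 0 := ih (j+1) (by omega) (by omega)
            simp [this]
          · rw [Nat.odd_iff] at hi
            have : coeff (i+1) f = 0 := ih (i+1) (by omega) (by omega)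
            simp [this]
      have hC : coeff (M+1) (f * d⁄dX ℂ (d⁄dX ℂ f))
          = ((M:ℂ)+2) * ((M:ℂ)+1) * coeff (M+2) f := by
        rw [coeff_mul]
        have hsub : ({(1, M)} : Finset (ℕ×ℕ)) ⊆ antidiagonal (M+1) := by
          intro p hp
          simp only [mem_singleton] at hp
          subst hp
          simp [HasAntidiagonal.mem_antidiagonal, Nat.add_comm]
        rw [← Finset.sum_subset hsub ?_]
        · rw [Finset.sum_singleton]
          simp only [coeff_derivative, h1]
          push_cast
          ring
        · intro p hp hps
          obtain ⟨i, j⟩ := p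
          simp only [HasAntidiagonal.mem_antidiagonal] at hp
          simp only [mem_singleton, Prod.mk.injEq, not_and] at hps
          simp only [coeff_derivative]
          rcases Nat.even_or_odd i with hi | hi
          · rw [Nat.even_iff] at hi
            have : coeff i f = 0 := ih i (by omega) hi
            simp [this]
          · rw [Nat.odd_iff] at hi
            have hne : ¬(i = 1 ∧ j = M) := fun h => hps h.1 h.2
            have : coeff (j+2) f = 0 := ih (j+2) (by omega) (by omega)
            simp [this]
      rw [hBdef, map_sub, hA, hC]
      ring
    have hR : coeff (M+2) (rescale 2 f * B)
        = (2 * (((M:ℂ)+2) * (1 - (M:ℂ))) + 2^(M+2)) * coeff (M+2) f := by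
      rw [coeff_mul]
      have hsub : ({(1, M+1), (M+2, 0)} : Finset (ℕ×ℕ)) ⊆ antidiagonal (M+2) := by
        intro p hp
        simp only [mem_insert, mem_singleton] at hp
        rcases hp with rfl | rfl <;> simp [HasAntidiagonal.mem_antidiagonal] <;> omega
      rw [← Finset.sum_subset hsub ?_]
      · rw [Finset.sum_insert (by simp), Finset.sum_singleton]
        simp only [coeff_rescale, h1, hBtop, hB0]
        push_cast
        ring
      · intro p hp hps
        obtain ⟨i, j⟩ := p
        simp only [HasAntidiagonal.mem_antidiagonal] at hp
        simp only [mem_insert, mem_singleton, Prod.mk.injEq, not_or] at hps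
        simp only [coeff_rescale]
        rcases Nat.even_or_odd i with hi | hi
        · rw [Nat.even_iff] at hi
          have : coeff i f = 0 := ih i (by omega) hi
          simp [this]
        · rw [Nat.odd_iff] at hi
          have : coeff j B = 0 := hBodd j (by omega) (by omega)
          simp [this]
    -- combine
    have hEq : 2 * ((M:ℂ) + 3) * coeff (M+2) f
        = (2 * (((M:ℂ)+2) * (1 - (M:ℂ))) + 2^(M+2)) * coeff (M+2) f := by
      rw [← hL, ← hR, heq]
    have hkey : (2 * ((M:ℂ)+1)^2 - 2^(M+2)) * coeff (M+2) f = 0 := by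
      linear_combination hEq
    have hcne : (2 * ((M:ℂ)+1)^2 - 2^(M+2)) ≠ 0 := by
      have := nat_ne M hM
      intro h
      apply this
      have : ((2 * (M + 1) ^ 2 : ℕ) : ℂ) = ((2 ^ (M + 2) : ℕ) : ℂ) := by
        push_cast
        linear_combination h
      exact_mod_cast this
    exact (mul_eq_zero.mp hkey).resolve_left hcne

/-- **Proposition 1.7.** If `f ∈ X + X²ℂ[[X]]` satisfies `𝔗²f(X) = f(2X)/2`,
written division-free as `2·f·f' = (f∘(2X))·((f')² − f·f'')`, then `f` is odd:
`f(−X) = −f(X)`, i.e. all coefficients of even powers of `X` vanish. -/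
theorem statement6 (f : PowerSeries ℂ)
    (h0 : coeff 0 f = 0) (h1 : coeff 1 f = 1)
    (heq : 2 * f * d⁄dX ℂ f =
      rescale 2 f * ((d⁄dX ℂ f) ^ 2 - f * d⁄dX ℂ (d⁄dX ℂ f))) :
    rescale (-1) f = -f ∧ ∀ k : ℕ, Even k → coeff k f = 0 := by
  have hev : ∀ k : ℕ, Even k → coeff k f = 0 := by
    intro k hk
    exact even_coeff f h0 h1 heq k (Nat.even_iff.mp hk)
  refine ⟨?_, hev⟩
  ext k
  rw [coeff_rescale, map_neg]
  rcases Nat.even_or_odd k with hk | hk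
  · rw [hev k hk]
    simp
  · rw [hk.neg_one_pow]
    ring
end

section
/- Let k ∈ ℂ and let f ∈ ℂ[[X]] satisfy coeff_0 f = 0, coeff_1 f = 1, and the formal differential equation (f')² = (1 − f²)·(1 − k²·f²) (these conditions characterize the formal power series of the Jacobi elliptic function Θ_k = sn(k|·)). Then 2·f·f' = (f∘(2X))·((f')² − f·f''), i.e. 𝔗²Θ_k(X) = Θ_k(2X)/2. -/
open PowerSeries

lemma statement7_rescale_C (a r : ℂ) : rescale a (C r) = C r := by
  ext n; simp only [coeff_rescale, coeff_C]; split <;> simp_all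

lemma statement7_deriv_rescale (a : ℂ) (h : PowerSeries ℂ) :
    d⁄dX ℂ (rescale a h) = C a * rescale a (d⁄dX ℂ h) := by
  ext n
  simp [coeff_derivative, coeff_rescale, coeff_C_mul, pow_succ]
  ring

lemma statement7_d_two : d⁄dX ℂ (2 : ℂ⟦X⟧) = 0 := by
  rw [← map_ofNat (C (R := ℂ)) 2, derivative_C]

lemma statement7_d_four : d⁄dX ℂ (4 : ℂ⟦X⟧) = 0 := by
  rw [← map_ofNat (C (R := ℂ)) 4, derivative_C]

lemma statement7_coeff_one_mul (a b : ℂ⟦X⟧) :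
    coeff 1 (a * b) = coeff 0 a * coeff 1 b + coeff 1 a * coeff 0 b := by
  rw [coeff_mul]
  rw [show Finset.HasAntidiagonal.antidiagonal 1 = {(0,1), (1,0)} from rfl]
  simp [Finset.sum_insert]

lemma statement7_vanish (A B Cc T r : PowerSeries ℂ)
    (hA : constantCoeff A ≠ 0)
    (h0 : coeff 0 r = 0) (h1 : coeff 1 r = 0)
    (heq : A * d⁄dX ℂ (d⁄dX ℂ r) = B * d⁄dX ℂ r + Cc * r + r * T) :
    r = 0 := by
  have key : ∀ n, ∀ m, m ≤ n + 1 → coeff m r = 0 := by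
    intro n
    induction n with
    | zero =>
      intro m hm
      interval_cases m
      · exact h0
      · exact h1
    | succ n ih =>
      intro m hm
      by_cases hlt : m ≤ n + 1
      · exact ih m hlt
      have hm2 : m = n + 2 := by omega
      subst hm2
      have hco := congrArg (coeff n) heq
      have e1 : coeff n (A * d⁄dX ℂ (d⁄dX ℂ r))
          = constantCoeff A * (coeff (n+2) r * ((n:ℂ)+2) * ((n:ℂ)+1)) := by
        rw [coeff_mul, Finset.sum_eq_single (0, n)]
        · rw [coeff_derivative, coeff_derivative, coeff_zero_eq_constantCoeff]
          push_cast; ring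
        · rintro ⟨i, j⟩ hmem hne
          rw [Finset.HasAntidiagonal.mem_antidiagonal] at hmem
          have hi : i ≠ 0 := by rintro rfl; exact hne (by simp [← hmem])
          have hz : coeff (j + 1 + 1) r = 0 := ih _ (by omega)
          rw [coeff_derivative, coeff_derivative, hz]; ring
        · intro h; exact absurd (Finset.HasAntidiagonal.mem_antidiagonal.mpr (by simp)) h
      have e2 : coeff n (B * d⁄dX ℂ r) = 0 := by
        rw [coeff_mul]; apply Finset.sum_eq_zero
        rintro ⟨i, j⟩ hmem
        rw [Finset.HasAntidiagonal.mem_antidiagonal] at hmem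
        rw [coeff_derivative, ih (j+1) (by omega)]; ring
      have e3 : coeff n (Cc * r) = 0 := by
        rw [coeff_mul]; apply Finset.sum_eq_zero
        rintro ⟨i, j⟩ hmem
        rw [Finset.HasAntidiagonal.mem_antidiagonal] at hmem
        rw [ih j (by omega)]; ring
      have e4 : coeff n (r * T) = 0 := by
        rw [coeff_mul]; apply Finset.sum_eq_zero
        rintro ⟨i, j⟩ hmem
        rw [Finset.HasAntidiagonal.mem_antidiagonal] at hmem
        rw [ih i (by omega)]; ring
      rw [map_add, map_add, e1, e2, e3, e4] at hco
      have hn2 : ((n:ℂ)+2) ≠ 0 := by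
        have : ((n:ℂ)+2) = ((n+2 : ℕ) : ℂ) := by push_cast; ring
        rw [this]; exact_mod_cast Nat.succ_ne_zero (n+1)
      have hn1 : ((n:ℂ)+1) ≠ 0 := by
        have : ((n:ℂ)+1) = ((n+1 : ℕ) : ℂ) := by push_cast; ring
        rw [this]; exact_mod_cast Nat.succ_ne_zero n
      simp only [add_zero, zero_add] at hco
      rcases mul_eq_zero.mp hco with h | h
      · exact absurd h hA
      rcases mul_eq_zero.mp h with h | h
      · rcases mul_eq_zero.mp h with h | h
        · exact h
        · exact absurd h hn2
      · exact absurd h hn1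
  ext n
  rw [map_zero]
  exact key n n (Nat.le_succ n)

/-- **Theorem 1.1.** Let `f` be the formal Jacobi elliptic sine `Θ_k`, i.e. the
normalized power series solution of `(f')² = (1 − f²)·(1 − k²·f²)`.  Then
`𝔗²Θ_k(X) = Θ_k(2X)/2`, written division-free as
`2·f·f' = (f∘(2X))·((f')² − f·f'')`. -/
theorem statement7 (k : ℂ) (f : PowerSeries ℂ)
    (h0 : coeff 0 f = 0) (h1 : coeff 1 f = 1)
    (hde : (d⁄dX ℂ f) ^ 2 = (1 - f ^ 2) * (1 - C (k ^ 2) * f ^ 2)) :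
    2 * f * d⁄dX ℂ f =
      rescale 2 f * ((d⁄dX ℂ f) ^ 2 - f * d⁄dX ℂ (d⁄dX ℂ f)) := by
  rw [map_pow] at hde
  have h1' : coeff 0 (d⁄dX ℂ f) = 1 := by
    rw [coeff_derivative]; simp [h1]
  have hcne : d⁄dX ℂ f ≠ 0 := by
    intro h; rw [h] at h1'; simp at h1'
  have h0' : constantCoeff f = 0 := by rw [← coeff_zero_eq_constantCoeff]; exact h0
  -- second derivative of f
  have hder := congrArg (d⁄dX ℂ) hde
  simp only [Derivation.leibniz, Derivation.leibniz_pow, smul_eq_mul, nsmul_eq_mul,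
    map_sub, Derivation.map_one_eq_zero, derivative_C, map_one] at hder
  have hdd : d⁄dX ℂ f * (2 * d⁄dX ℂ (d⁄dX ℂ f)
      - 2 * (-(1 + (C k)^2) * f + 2 * (C k)^2 * f^3)) = 0 := by
    linear_combination hder
  have hc'' : d⁄dX ℂ (d⁄dX ℂ f) = -(1 + (C k)^2) * f + 2 * (C k)^2 * f^3 := by
    rcases mul_eq_zero.mp hdd with h | h
    · exact absurd h hcne
    · have h2 : (2 : ℂ⟦X⟧) ≠ 0 := by
        intro h2; have := congrArg (constantCoeff (R := ℂ)) h2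
        rw [map_ofNat] at this; norm_num at this
      have := sub_eq_zero.mp h
      rcases mul_eq_zero.mp (by linear_combination this :
        (2:ℂ⟦X⟧) * (d⁄dX ℂ (d⁄dX ℂ f) - (-(1 + (C k)^2) * f + 2 * (C k)^2 * f^3)) = 0) with
        h3 | h3
      · exact absurd h3 h2
      · exact sub_eq_zero.mp h3
  -- second derivative of g = rescale 2 f
  have hg2 : d⁄dX ℂ (d⁄dX ℂ (rescale 2 f)) =
      -4*(1 + (C k)^2) * rescale 2 f + 8*(C k)^2 * (rescale 2 f)^3 := by
    rw [statement7_deriv_rescale]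
    rw [Derivation.leibniz]
    rw [statement7_deriv_rescale, hc'']
    simp only [smul_eq_mul, derivative_C, statement7_d_two, mul_zero, add_zero, zero_add,
      map_add, map_mul, map_neg, map_pow, map_one, map_ofNat, statement7_rescale_C, zero_mul]
    ring
  -- the difference r and its derivatives
  have hr1 : d⁄dX ℂ (2 * f * d⁄dX ℂ f - rescale 2 f * (1 - (C k)^2 * f^4)) =
      -(d⁄dX ℂ (rescale 2 f)) + 2*(d⁄dX ℂ f)^2 - 2*f^2 - 2*(C k)^2*f^2
        + 4*(C k)^2*f^3*(d⁄dX ℂ f)*(rescale 2 f) + 4*(C k)^2*f^4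
        + (C k)^2*f^4*(d⁄dX ℂ (rescale 2 f)) := by
    simp only [map_sub, Derivation.leibniz, Derivation.leibniz_pow, smul_eq_mul, nsmul_eq_mul,
      derivative_C, Derivation.map_one_eq_zero, statement7_d_two, statement7_d_four,
      mul_zero, zero_mul, add_zero, zero_add, zero_sub, sub_zero]
    linear_combination (2*f) * hc''
  have hr2 : d⁄dX ℂ (d⁄dX ℂ (2 * f * d⁄dX ℂ f - rescale 2 f * (1 - (C k)^2 * f^4))) =
      4*(rescale 2 f) + 4*(C k)^2*(rescale 2 f) - 8*(C k)^2*(rescale 2 f)^3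
        - 8*f*(d⁄dX ℂ f) - 8*(C k)^2*f*(d⁄dX ℂ f)
        + 12*(C k)^2*f^2*(d⁄dX ℂ f)^2*(rescale 2 f)
        + 24*(C k)^2*f^3*(d⁄dX ℂ f)
        + 8*(C k)^2*f^3*(d⁄dX ℂ f)*(d⁄dX ℂ (rescale 2 f))
        - 8*(C k)^2*f^4*(rescale 2 f) - 8*(C k)^4*f^4*(rescale 2 f)
        + 8*(C k)^4*f^4*(rescale 2 f)^3 + 8*(C k)^4*f^6*(rescale 2 f) := by
    rw [congrArg (d⁄dX ℂ) hr1]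
    simp only [map_sub, map_add, map_neg, Derivation.leibniz, Derivation.leibniz_pow,
      smul_eq_mul, nsmul_eq_mul, derivative_C, Derivation.map_one_eq_zero,
      statement7_d_two, statement7_d_four,
      mul_zero, zero_mul, add_zero, zero_add, zero_sub, sub_zero]
    linear_combination (4*(d⁄dX ℂ f) + 4*(C k)^2*f^3*(rescale 2 f)) * hc''
      + ((C k)^2*f^4 - 1) * hg2
  -- master identity
  have heq : (1 - (C k)^2*f^4)^2
        * d⁄dX ℂ (d⁄dX ℂ (2 * f * d⁄dX ℂ f - rescale 2 f * (1 - (C k)^2 * f^4))) =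
      (2*(1 - (C k)^2*f^4)*(-(4*(C k)^2*f^3*(d⁄dX ℂ f))))
        * d⁄dX ℂ (2 * f * d⁄dX ℂ f - rescale 2 f * (1 - (C k)^2 * f^4))
      + (-(2*(-(4*(C k)^2*f^3*(d⁄dX ℂ f)))^2
          - (1 - (C k)^2*f^4)*(-(12*(C k)^2*f^2*(d⁄dX ℂ f)^2)
              - 4*(C k)^2*f^3*(-(1 + (C k)^2) * f + 2 * (C k)^2 * f^3))
          - (-(4*(1 + (C k)^2)))*(1 - (C k)^2*f^4)^2))
        * (2 * f * d⁄dX ℂ f - rescale 2 f * (1 - (C k)^2 * f^4))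
      + (2 * f * d⁄dX ℂ f - rescale 2 f * (1 - (C k)^2 * f^4))
        * (8*(C k)^2*((2*f*d⁄dX ℂ f)^2
            + (2*f*d⁄dX ℂ f)*(rescale 2 f * (1 - (C k)^2*f^4))
            + (rescale 2 f * (1 - (C k)^2*f^4))^2)) := by
    rw [hr2, hr1]
    linear_combination (24*(C k)^4*f^7*(d⁄dX ℂ f) - 24*(C k)^2*f^3*(d⁄dX ℂ f)) * hde
  -- initial coefficients of r
  have hg0 : coeff 0 (rescale 2 f) = 0 := by rw [coeff_rescale]; simp [h0]
  have hg0' : constantCoeff (rescale 2 f) = 0 := by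
    rw [← coeff_zero_eq_constantCoeff]; exact hg0
  have hco0 : coeff 0 (2 * f * d⁄dX ℂ f - rescale 2 f * (1 - (C k)^2 * f^4)) = 0 := by
    rw [coeff_zero_eq_constantCoeff]
    simp [map_sub, map_mul, h0', hg0']
  have hco1 : coeff 1 (2 * f * d⁄dX ℂ f - rescale 2 f * (1 - (C k)^2 * f^4)) = 0 := by
    rw [map_sub, statement7_coeff_one_mul, statement7_coeff_one_mul,
      statement7_coeff_one_mul]
    have e0 : coeff 0 (2:ℂ⟦X⟧) = 2 := by
      rw [coeff_zero_eq_constantCoeff, map_ofNat]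
    have e0' : coeff 1 (2:ℂ⟦X⟧) = 0 := by
      rw [← map_ofNat (C (R := ℂ)) 2, coeff_C]; norm_num
    have e3 : coeff 1 (rescale 2 f) = 2 := by rw [coeff_rescale, h1]; norm_num
    have e4 : coeff 0 (1 - (C k)^2*f^4) = 1 := by
      rw [coeff_zero_eq_constantCoeff]; simp [h0']
    rw [e0, e0', e3, e4, hg0, h0, h1, h1']
    have e5 : coeff 0 (2 * f) = 0 := by
      rw [coeff_zero_eq_constantCoeff]; simp [h0']
    rw [e5]
    ring
  have hA : constantCoeff ((1 - (C k)^2*f^4)^2) ≠ 0 := by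
    simp [map_pow, map_sub, map_mul, h0']
  have hrz := statement7_vanish _ _ _ _ _ hA hco0 hco1 heq
  linear_combination hrz - rescale 2 f * hde + rescale 2 f * f * hc''
end

section
/- Let f ∈ X + X²ℂ[[X]] satisfy 2·f·f' = (f∘(2X))·((f')² − f·f'') (i.e. 𝔗²f(X) = f(2X)/2). Then there exist a, b ∈ ℂ such that (f')² = (1 − a·f²)·(1 − b·f²). (Equivalently, f(X) = Θ_k(AX)/A for some constants A, k ∈ ℂ, where Θ_k is the formal Jacobi elliptic sine; this is the uniqueness theorem: the only normalized formal power series solutions of 𝔗²f = f(2X)/2 are the scaled Jacobi elliptic functions.) -/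
open PowerSeries Finset

noncomputable section
namespace S8

abbrev D (f : PowerSeries ℂ) : PowerSeries ℂ := d⁄dX ℂ f

lemma coeff0_mul (a b : ℂ⟦X⟧) :
    coeff 0 (a * b) = coeff 0 a * coeff 0 b := by
  simp [coeff_mul]

lemma coeff1_mul (a b : ℂ⟦X⟧) :
    coeff 1 (a * b) = coeff 0 a * coeff 1 b + coeff 1 a * coeff 0 b := by
  rw [coeff_mul, show (1:ℕ) = 0 + 1 from rfl, Finset.Nat.sum_antidiagonal_eq_sum_range_succ_mk]
  simp [Finset.sum_range_succ]

lemma coeff2_mul (a b : ℂ⟦X⟧) :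
    coeff 2 (a * b) = coeff 0 a * coeff 2 b + coeff 1 a * coeff 1 b
      + coeff 2 a * coeff 0 b := by
  rw [coeff_mul, show (2:ℕ) = 1 + 1 from rfl, Finset.Nat.sum_antidiagonal_eq_sum_range_succ_mk]
  simp [Finset.sum_range_succ]
  try ring

lemma deriv_mul (a b : ℂ⟦X⟧) : D (a * b) = a * D b + b * D a := by
  simpa [smul_eq_mul] using Derivation.leibniz (d⁄dX ℂ) a b

lemma coeff_D (f : ℂ⟦X⟧) (n : ℕ) : coeff n (D f) = coeff (n+1) f * (n+1) :=
  coeff_derivative f n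

lemma D_eq_zero_of (h : ℂ⟦X⟧) (hd : D h = 0) (h0 : coeff 0 h = 0) : h = 0 := by
  ext n
  cases n with
  | zero => simpa using h0
  | succ n =>
    have := congrArg (coeff n) hd
    rw [coeff_D] at this
    simp only [map_zero] at this
    have h2 : ((n:ℂ)+1) ≠ 0 := Nat.cast_add_one_ne_zero n
    have := (mul_eq_zero.mp this).resolve_right (by exact_mod_cast h2)
    simpa using this

lemma D_rescale (a : ℂ) (f : ℂ⟦X⟧) : D (rescale a f) = C a * rescale a (D f) := by
  ext n
  rw [coeff_D, coeff_rescale]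
  simp only [coeff_C_mul, coeff_rescale, coeff_D]
  ring

lemma rescale_C' (a r : ℂ) : rescale a (C r) = C r := by
  ext n
  rw [coeff_rescale]
  cases n with
  | zero => simp
  | succ n => simp [coeff_C]

/-! ### The coefficient recursion -/

def cstep (s p : ℂ) (v : ℕ → ℂ) : ℕ → ℂ
  | 0 => 0
  | 1 => 1
  | (m+2) => (-s * v m
      + 2*p * ∑ i ∈ Finset.range (m+1),
          (∑ j ∈ Finset.range (i+1), v j * v (i-j)) * v (m-i)) / (((m:ℂ)+2)*((m:ℂ)+1))

def cs (s p : ℂ) : ℕ → ℕ → ℂ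
  | 0 => fun _ => 0
  | (n+1) => fun k => if k = n then cstep s p (cs s p n) n else cs s p n k

def c (s p : ℂ) (n : ℕ) : ℂ := cs s p (n+1) n

lemma cs_eq (s p : ℂ) : ∀ n k, k < n → cs s p n k = c s p k := by
  intro n
  induction n with
  | zero => intro k hk; omega
  | succ n ih =>
    intro k hk
    by_cases h : k = n
    · subst h; rfl
    · have : k < n := by omega
      show cs s p (n+1) k = c s p k
      rw [cs]
      simp only [if_neg h]
      exact ih k this

lemma cstep_congr (s p : ℂ) (v w : ℕ → ℂ) (n : ℕ) (h : ∀ i < n, v i = w i) :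
    cstep s p v n = cstep s p w n := by
  match n with
  | 0 => rfl
  | 1 => rfl
  | (m+2) =>
    rw [cstep, cstep]
    congr 2
    · rw [h m (by omega)]
    congr 1
    apply Finset.sum_congr rfl
    intro i hi
    rw [Finset.mem_range] at hi
    rw [h (m-i) (by omega)]
    congr 1
    apply Finset.sum_congr rfl
    intro j hj
    rw [Finset.mem_range] at hj
    rw [h j (by omega), h (i-j) (by omega)]

lemma c_zero (s p : ℂ) : c s p 0 = 0 := rfl
lemma c_one (s p : ℂ) : c s p 1 = 1 := rfl

lemma c_rec (s p : ℂ) (m : ℕ) : c s p (m+2) =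
    (-s * c s p m
      + 2*p * ∑ i ∈ Finset.range (m+1),
          (∑ j ∈ Finset.range (i+1), c s p j * c s p (i-j)) * c s p (m-i))
      / (((m:ℂ)+2)*((m:ℂ)+1)) := by
  show cs s p (m+3) (m+2) = _
  rw [cs]
  simp only [if_pos rfl]
  rw [cstep_congr s p _ (c s p) (m+2) (fun i hi => cs_eq s p (m+2) i hi)]
  rfl

/-! ### The series `g` and its ODE -/

def g (s p : ℂ) : ℂ⟦X⟧ := mk (c s p)

lemma coeff_g (s p : ℂ) (n : ℕ) : coeff n (g s p) = c s p n := coeff_mk n _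

lemma coeff_cube (h : ℂ⟦X⟧) (n : ℕ) : coeff n (h*h*h) =
    ∑ i ∈ Finset.range (n+1),
      (∑ j ∈ Finset.range (i+1), coeff j h * coeff (i-j) h) * coeff (n-i) h := by
  rw [coeff_mul, Finset.Nat.sum_antidiagonal_eq_sum_range_succ_mk]
  apply Finset.sum_congr rfl
  intro i _
  rw [coeff_mul, Finset.Nat.sum_antidiagonal_eq_sum_range_succ_mk]

lemma g_ODE0 (s p : ℂ) : D (D (g s p)) = C (-s) * g s p + C (2*p) * (g s p * g s p * g s p) := by
  ext n
  rw [coeff_D, coeff_D]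
  simp only [map_add, coeff_C_mul, coeff_cube, coeff_g]
  rw [c_rec s p n]
  have hne1 : ((n:ℂ))+2 ≠ 0 := by
    have := Nat.cast_add_one_ne_zero (R := ℂ) (n+1); push_cast at this
    intro h; apply this; rw [← h]; ring
  have hne2 : ((n:ℂ))+1 ≠ 0 := Nat.cast_add_one_ne_zero n
  field_simp
  push_cast
  ring

lemma g_ODE (s p : ℂ) : D (D (g s p)) = -(C s) * g s p + 2 * C p * (g s p * g s p * g s p) := by
  rw [g_ODE0]
  simp only [map_neg, map_mul, map_ofNat]

lemma c_two (s p : ℂ) : c s p 2 = 0 := by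
  rw [show (2:ℕ) = 0+2 from rfl, c_rec]
  simp [Finset.sum_range_succ, c_zero, c_one]

lemma c_three (s p : ℂ) : c s p 3 = -s/6 := by
  rw [show (3:ℕ) = 1+2 from rfl, c_rec]
  simp [Finset.sum_range_succ, c_zero, c_one]
  ring

lemma c_four (s p : ℂ) : c s p 4 = 0 := by
  rw [show (4:ℕ) = 2+2 from rfl, c_rec]
  simp [Finset.sum_range_succ, c_zero, c_one, c_two]

lemma c_five (s p : ℂ) : c s p 5 = s^2/120 + p/10 := by
  rw [show (5:ℕ) = 3+2 from rfl, c_rec]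
  simp [Finset.sum_range_succ, c_zero, c_one, c_two, c_three]
  ring

/-! ### First integral -/

lemma first_integral (s p : ℂ) :
    D (g s p) * D (g s p)
      = 1 - C s * (g s p * g s p) + C p * (g s p * g s p * g s p * g s p) := by
  set u := g s p with hu
  set v := D (g s p) with hv
  have key : (v * v - (1 - C s * (u*u) + C p * (u*u*u*u))) = 0 := by
    apply D_eq_zero_of
    · have hDv : D v = -(C s) * u + 2 * C p * (u*u*u) := g_ODE s p
      simp only [map_sub, map_add, Derivation.map_one_eq_zero, deriv_mul, derivative_C, hDv]
      ring
    · have h0u : coeff 0 u = 0 := by rw [hu, coeff_g, c_zero]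
      have h1u : coeff 0 v = 1 := by rw [hv, coeff_D, coeff_g, c_one]; simp
      simp only [map_sub, map_add, coeff_zero_one, coeff0_mul, h0u, h1u, coeff_C_mul]
      ring
  linear_combination key

/-! ### Duplication formula -/

def q (s p : ℂ) : ℂ⟦X⟧ := 1 - C p * (g s p * g s p * g s p * g s p)

lemma constantCoeff_q (s p : ℂ) : constantCoeff (q s p) = 1 := by
  have h0u : coeff 0 (g s p) = 0 := by rw [coeff_g, c_zero]
  rw [← coeff_zero_eq_constantCoeff_apply]
  simp only [q, map_sub, coeff_zero_one, coeff_C_mul, coeff0_mul, h0u]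
  ring

lemma q_ne_zero (s p : ℂ) : q s p ≠ 0 := by
  intro h
  have := constantCoeff_q s p
  rw [h] at this
  simp at this

lemma D_q (s p : ℂ) :
    D (q s p) = -4 * C p * (g s p * g s p * g s p) * D (g s p) := by
  simp only [q, map_sub, Derivation.map_one_eq_zero, deriv_mul, derivative_C]
  ring

lemma coeff_mul_eq_zero_left (d w : ℂ⟦X⟧) (m : ℕ) (hd : ∀ i ≤ m, coeff i d = 0) :
    coeff m (d * w) = 0 := by
  rw [coeff_mul]
  apply Finset.sum_eq_zero
  intro x hx
  have hx : x.1 + x.2 = m := by simpa using hx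
  rw [hd x.1 (by omega), zero_mul]

lemma hD2 : D (2 : ℂ⟦X⟧) = 0 := by
  rw [show (2:ℂ⟦X⟧) = C 2 from (map_ofNat _ _).symm]; simp

lemma hD4 : D (4 : ℂ⟦X⟧) = 0 := by
  rw [show (4:ℂ⟦X⟧) = C 4 from (map_ofNat _ _).symm]; simp

lemma coeff0_two : coeff 0 (2 : ℂ⟦X⟧) = 2 := by
  rw [show (2:ℂ⟦X⟧) = C 2 from (map_ofNat _ _).symm]; simp
lemma coeff1_two : coeff 1 (2 : ℂ⟦X⟧) = 0 := by
  rw [show (2:ℂ⟦X⟧) = C 2 from (map_ofNat _ _).symm]; simp [coeff_C]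

/-- Uniqueness for the second-order ODE `y'' = a y + b y³`. -/
lemma ode_unique (a b y z : ℂ⟦X⟧)
    (hy : D (D y) = a * y + b * (y*y*y))
    (hz : D (D z) = a * z + b * (z*z*z))
    (h0 : coeff 0 y = coeff 0 z) (h1 : coeff 1 y = coeff 1 z) : y = z := by
  ext n
  induction n using Nat.strong_induction_on with
  | _ n ih =>
    match n with
    | 0 => exact h0
    | 1 => exact h1
    | (m+2) =>
      have hsub : D (D (y - z)) = (y - z) * a + (y - z) * ((y*y + y*z + z*z) * b) := by
        simp only [map_sub]
        linear_combination hy - hz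
      have hcm := congrArg (coeff m) hsub
      rw [coeff_D, coeff_D] at hcm
      have hd : ∀ i ≤ m, coeff i (y - z) = 0 := by
        intro i hi
        rw [map_sub, ih i (by omega), sub_self]
      rw [map_add, coeff_mul_eq_zero_left _ _ _ hd, coeff_mul_eq_zero_left _ _ _ hd] at hcm
      have hne : (((m:ℂ)+2) * ((m:ℂ)+1)) ≠ 0 := by
        apply mul_ne_zero
        · have := Nat.cast_add_one_ne_zero (R := ℂ) (m+1); push_cast at this
          intro hcon; apply this; rw [← hcon]; ring
        · exact Nat.cast_add_one_ne_zero m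
      have hmul : coeff (m+2) (y-z) * (((m:ℂ)+2) * ((m:ℂ)+1)) = 0 := by
        push_cast at hcm ⊢
        linear_combination hcm
      have hz0 := (mul_eq_zero.mp hmul).resolve_right hne
      rw [map_sub, sub_eq_zero] at hz0
      exact hz0

lemma dup (s p : ℂ) :
    rescale 2 (g s p) * q s p = 2 * g s p * D (g s p) := by
  simp only [q]
  set u := g s p with hu
  set v := D u with hv
  have hDu : D u = v := hv.symm
  have hDv : D v = -(C s) * u + 2 * C p * (u*u*u) := by
    rw [hv]; exact g_ODE s p
  have FI : v * v = 1 - C s * (u*u) + C p * (u*u*u*u) := by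
    rw [hv]; exact first_integral s p
  have h0u : coeff 0 u = 0 := by rw [hu, coeff_g, c_zero]
  have h1u : coeff 1 u = 1 := by rw [hu, coeff_g, c_one]
  have h0v : coeff 0 v = 1 := by rw [hv, hu, coeff_D, coeff_g, c_one]; simp
  have hDDG : D (D (rescale 2 u)) = (-4 * C s) * (rescale 2 u)
      + (8 * C p) * ((rescale 2 u)*(rescale 2 u)*(rescale 2 u)) := by
    rw [D_rescale, deriv_mul, D_rescale, ← hv, hDv]
    simp only [map_add, map_mul, map_neg, map_ofNat, rescale_C', derivative_C, hD2]
    ring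
  clear_value v
  clear_value u
  clear hu hv
  set Q : ℂ⟦X⟧ := 1 - C p * (u*u*u*u) with hQdef
  have hDQ : D Q = -4 * C p * (u*u*u) * v := by
    rw [hQdef]
    simp only [map_sub, Derivation.map_one_eq_zero, deriv_mul, derivative_C, hDu]
    ring
  clear_value Q
  have hQ0 : coeff 0 Q = 1 := by
    rw [hQdef]
    simp only [map_sub, coeff_zero_one, coeff_C_mul, coeff0_mul, h0u]
    ring
  have hc0 : constantCoeff Q ≠ 0 := by
    rw [← coeff_zero_eq_constantCoeff_apply, hQ0]
    exact one_ne_zero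
  have hQne : Q ≠ 0 := by
    intro hcon; apply hc0; rw [hcon]; simp
  obtain ⟨h, hqh⟩ : ∃ h : ℂ⟦X⟧, h * Q = 2 * u * v :=
    ⟨(2*u*v) * Q⁻¹, by rw [mul_assoc, PowerSeries.inv_mul_cancel Q hc0, mul_one]⟩
  have e1 : h * D Q + Q * D h = D (2 * u * v) := by
    rw [← deriv_mul, hqh]
  have e2 : D h * (Q*Q) = D (2*u*v) * Q - (2*u*v) * D Q := by
    linear_combination Q * e1 - D Q * hqh
  have e3 := congrArg D e2
  rw [deriv_mul, deriv_mul] at e3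
  have e4 : D (D h) * (Q*Q*Q) = D (D (2*u*v) * Q - (2*u*v) * D Q) * Q
      - 2 * D Q * (D (2*u*v) * Q - (2*u*v) * D Q) := by
    linear_combination Q * e3 - 2 * D Q * e2
  simp only [deriv_mul, map_sub, map_add, map_neg, map_zero, Derivation.map_one_eq_zero,
    derivative_C, hD2, hD4, hDu, hDv, hDQ] at e4
  have e5 : D (D h) * (Q*Q*Q) = -4 * C s * (2*u*v) * (Q*Q)
      + 8 * C p * ((2*u*v)*(2*u*v)*(2*u*v)) := by
    rw [e4, hQdef]
    linear_combination (24*(C p)^2*u^7*v - 24*(C p)*u^3*v) * FI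
  have hQ3ne : Q*Q*Q ≠ 0 := mul_ne_zero (mul_ne_zero hQne hQne) hQne
  have hDDh : D (D h) = (-4 * C s) * h + (8 * C p) * (h*h*h) := by
    apply mul_right_cancel₀ hQ3ne
    rw [e5]
    linear_combination (4*(C s)*(Q*Q)
      - 8*(C p)*((2*u*v)*(2*u*v) + (2*u*v)*(h*Q) + (h*Q)*(h*Q))) * hqh
  have hh0 : coeff 0 h = 0 := by
    have hco := congrArg (coeff 0) hqh
    rw [coeff0_mul, coeff0_mul, coeff0_mul, coeff0_two, h0u, hQ0] at hco
    simpa using hco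
  have hh1 : coeff 1 h = 2 := by
    have hco := congrArg (coeff 1) hqh
    have h2uv : coeff 1 (2*u*v) = 2 := by
      rw [coeff1_mul, coeff1_mul, coeff0_mul, coeff0_two, coeff1_two, h0u, h1u, h0v]
      ring
    rw [coeff1_mul, hQ0, hh0, h2uv] at hco
    simpa using hco
  have hG0 : coeff 0 (rescale 2 u) = 0 := by rw [coeff_rescale, h0u]; ring
  have hG1 : coeff 1 (rescale 2 u) = 2 := by rw [coeff_rescale, h1u]; ring
  have hGh : h = rescale 2 u :=
    ode_unique (-4 * C s) (8 * C p) h (rescale 2 u) hDDh hDDG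
      (by rw [hh0, hG0]) (by rw [hh1, hG1])
  rw [← hGh, hqh]

lemma g_heq (s p : ℂ) :
    2 * g s p * D (g s p)
      = rescale 2 (g s p) * ((D (g s p)) ^ 2 - g s p * D (D (g s p))) := by
  have hq : (D (g s p)) ^ 2 - g s p * D (D (g s p)) = q s p := by
    rw [g_ODE]
    have := first_integral s p
    simp only [q]
    linear_combination this
  rw [hq, ← dup]


/-! ### Powers of X and derivatives -/

lemma coeff2_two : coeff 2 (2 : ℂ⟦X⟧) = 0 := by
  rw [show (2:ℂ⟦X⟧) = C 2 from (map_ofNat _ _).symm]; simp [coeff_C]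

lemma D_X_pow_k1 (k : ℕ) : D ((X:ℂ⟦X⟧)^(k+1)) = C ((k:ℂ)+1) * X^k := by
  ext n
  rw [coeff_D]
  simp only [coeff_X_pow, coeff_C_mul]
  by_cases h : n = k
  · subst h
    rw [if_pos rfl, if_pos rfl]
    push_cast
    ring
  · rw [if_neg h, if_neg (by omega)]
    ring

lemma D_X_pow_k2 (k : ℕ) : D ((X:ℂ⟦X⟧)^(k+2)) = C ((k:ℂ)+2) * X^(k+1) := by
  ext n
  rw [coeff_D]
  simp only [coeff_X_pow, coeff_C_mul]
  by_cases h : n = k+1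
  · subst h
    rw [if_pos rfl, if_pos rfl]
    push_cast
    ring
  · rw [if_neg h, if_neg (by omega)]
    ring

lemma rescale_X_pow_mul (m : ℕ) (e : ℂ⟦X⟧) :
    rescale 2 ((X:ℂ⟦X⟧)^m * e) = C ((2:ℂ)^m) * ((X:ℂ⟦X⟧)^m * rescale 2 e) := by
  rw [map_mul, map_pow, rescale_X, mul_pow, ← map_pow]
  ring

/-! ### Arithmetic facts -/

lemma sq_lt_pow' (n : ℕ) (h : 5 ≤ n) : n^2 < 2^n := by
  induction n, h using Nat.le_induction with
  | base => norm_num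
  | succ n hn ih =>
    have h1 : 2*n+1 ≤ n^2 := by nlinarith
    have : (n+1)^2 = n^2 + (2*n+1) := by ring
    have h2 : 2^(n+1) = 2^n + 2^n := by ring
    omega

lemma hfac (k : ℕ) (h1 : k ≠ 1) (h3 : k ≠ 3) : 2*((k:ℂ)+1)^2 - 2^(k+2) ≠ 0 := by
  have hne : 2*(k+1)^2 ≠ 2^(k+2) := by
    rcases Nat.lt_or_ge k 4 with h | h
    · interval_cases k <;> simp_all
    · have h5 : 5 ≤ k+1 := by omega
      have hlt := sq_lt_pow' (k+1) h5
      have h2 : 2^(k+2) = 2^(k+1) + 2^(k+1) := by ring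
      omega
  intro hcon
  apply hne
  have : ((2*(k+1)^2 : ℕ) : ℂ) = ((2^(k+2) : ℕ) : ℂ) := by
    push_cast
    linear_combination hcon
  exact_mod_cast this

/-! ### Uniqueness of solutions of the functional equation -/

lemma D_add' (a b : ℂ⟦X⟧) : D (a+b) = D a + D b := map_add _ _ _

lemma D_C_mul (α : ℂ) (w : ℂ⟦X⟧) : D (C α * w) = C α * D w := by
  rw [deriv_mul]
  simp

lemma coeff_add' (n : ℕ) (a b : ℂ⟦X⟧) : coeff n (a+b) = coeff n a + coeff n b :=
  map_add _ _ _
lemma coeff_sub' (n : ℕ) (a b : ℂ⟦X⟧) : coeff n (a-b) = coeff n a - coeff n b :=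
  map_sub _ _ _

lemma heq_step (f g : ℂ⟦X⟧)
    (hf1 : coeff 1 f = 1) (hg0 : coeff 0 g = 0) (hg1 : coeff 1 g = 1)
    (heqf : 2 * f * D f = rescale 2 f * ((D f)^2 - f * D (D f)))
    (heqg : 2 * g * D g = rescale 2 g * ((D g)^2 - g * D (D g)))
    (k : ℕ) (hne : 2*((k:ℂ)+1)^2 - 2^(k+2) ≠ 0)
    (hlow : ∀ i < k+2, coeff i f = coeff i g) :
    coeff (k+2) f = coeff (k+2) g := by
  have hf0 : coeff 0 f = 0 := by rw [hlow 0 (by omega), hg0]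
  have hDf0 : coeff 0 (D f) = 1 := by rw [coeff_D, hf1]; simp
  have hDg0 : coeff 0 (D g) = 1 := by rw [coeff_D, hg1]; simp
  have hdvd : (X:ℂ⟦X⟧)^(k+2) ∣ (f - g) :=
    X_pow_dvd_iff.mpr (fun i hi => by rw [map_sub, hlow i hi, sub_self])
  obtain ⟨e, he⟩ := hdvd
  have hcoe : coeff (k+2) (f - g) = coeff 0 e := by
    rw [he]
    simpa using coeff_X_pow_mul e (k+2) 0
  suffices h0e : coeff 0 e = 0 by
    rw [map_sub, h0e] at hcoe
    exact sub_eq_zero.mp hcoe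
  have key : 2 * ((X:ℂ⟦X⟧)^(k+2)*e) * D f + 2 * g * D ((X:ℂ⟦X⟧)^(k+2)*e)
      = rescale 2 ((X:ℂ⟦X⟧)^(k+2)*e) * ((D f)^2 - f * D (D f))
        + rescale 2 g * (D ((X:ℂ⟦X⟧)^(k+2)*e) * (D f + D g) - ((X:ℂ⟦X⟧)^(k+2)*e) * D (D f)
            - g * D (D ((X:ℂ⟦X⟧)^(k+2)*e))) := by
    rw [← he]
    simp only [map_sub]
    linear_combination heqf - heqg
  rw [rescale_X_pow_mul] at key
  have hDk2 : ∀ w : ℂ⟦X⟧, D ((X:ℂ⟦X⟧)^(k+2) * w)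
      = C ((k:ℂ)+2) * ((X:ℂ⟦X⟧)^(k+1) * w) + (X:ℂ⟦X⟧)^(k+2) * D w := fun w => by
    rw [deriv_mul, D_X_pow_k2]; ring
  have hDk1 : ∀ w : ℂ⟦X⟧, D ((X:ℂ⟦X⟧)^(k+1) * w)
      = C ((k:ℂ)+1) * ((X:ℂ⟦X⟧)^k * w) + (X:ℂ⟦X⟧)^(k+1) * D w := fun w => by
    rw [deriv_mul, D_X_pow_k1]; ring
  simp only [hDk2, D_add', D_C_mul, hDk1] at key
  have key2 : (X:ℂ⟦X⟧)^k * (C ((k:ℂ)+2) * (C ((k:ℂ)+1) * (rescale 2 g * (g * e))))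
      + (X:ℂ⟦X⟧)^(k+1) * (C ((k:ℂ)+2) * (2*(g * e))
          - rescale 2 g * (C ((k:ℂ)+2) * (e * (D f + D g))
            - C ((k:ℂ)+2) * (2*(g * D e))))
      + (X:ℂ⟦X⟧)^(k+2) * (2*(e * D f) + 2*(g * D e)
          - C ((2:ℂ)^(k+2)) * (rescale 2 e * (D f * D f - f * D (D f)))
          - rescale 2 g * (D e * (D f + D g) - e * D (D f) - g * D (D e))) = 0 := by
    linear_combination key
  have hsum := congrArg (coeff (k+2)) key2
  have c1 : coeff (k+2) ((X:ℂ⟦X⟧)^k * (C ((k:ℂ)+2) * (C ((k:ℂ)+1) * (rescale 2 g * (g * e)))))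
      = coeff 2 (C ((k:ℂ)+2) * (C ((k:ℂ)+1) * (rescale 2 g * (g * e)))) := by
    have := coeff_X_pow_mul (C ((k:ℂ)+2) * (C ((k:ℂ)+1) * (rescale 2 g * (g * e)))) k 2
    rwa [show 2+k = k+2 by omega] at this
  have c2 : coeff (k+2) ((X:ℂ⟦X⟧)^(k+1) * (C ((k:ℂ)+2) * (2*(g * e))
          - rescale 2 g * (C ((k:ℂ)+2) * (e * (D f + D g))
            - C ((k:ℂ)+2) * (2*(g * D e)))))
      = coeff 1 (C ((k:ℂ)+2) * (2*(g * e))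
          - rescale 2 g * (C ((k:ℂ)+2) * (e * (D f + D g))
            - C ((k:ℂ)+2) * (2*(g * D e)))) := by
    have := coeff_X_pow_mul (C ((k:ℂ)+2) * (2*(g * e))
          - rescale 2 g * (C ((k:ℂ)+2) * (e * (D f + D g))
            - C ((k:ℂ)+2) * (2*(g * D e)))) (k+1) 1
    rwa [show 1+(k+1) = k+2 by omega] at this
  have c3 : coeff (k+2) ((X:ℂ⟦X⟧)^(k+2) * (2*(e * D f) + 2*(g * D e)
          - C ((2:ℂ)^(k+2)) * (rescale 2 e * (D f * D f - f * D (D f)))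
          - rescale 2 g * (D e * (D f + D g) - e * D (D f) - g * D (D e))))
      = coeff 0 (2*(e * D f) + 2*(g * D e)
          - C ((2:ℂ)^(k+2)) * (rescale 2 e * (D f * D f - f * D (D f)))
          - rescale 2 g * (D e * (D f + D g) - e * D (D f) - g * D (D e))) := by
    have := coeff_X_pow_mul (2*(e * D f) + 2*(g * D e)
          - C ((2:ℂ)^(k+2)) * (rescale 2 e * (D f * D f - f * D (D f)))
          - rescale 2 g * (D e * (D f + D g) - e * D (D f) - g * D (D e))) (k+2) 0
    rwa [show 0+(k+2) = k+2 by omega] at this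
  rw [map_add, map_add, c1, c2, c3, map_zero] at hsum
  simp only [coeff_sub', coeff_add', coeff_C_mul, coeff2_mul, coeff1_mul, coeff0_mul,
    coeff_rescale, coeff0_two, coeff1_two, coeff2_two, hf0, hf1, hg0, hg1, hDf0, hDg0] at hsum
  have h2 : (2*((k:ℂ)+1)^2 - 2^(k+2)) * coeff 0 e = 0 := by
    linear_combination hsum
  exact (mul_eq_zero.mp h2).resolve_left hne

lemma heq_unique (f g : ℂ⟦X⟧)
    (hf0 : coeff 0 f = 0) (hf1 : coeff 1 f = 1)
    (hg0 : coeff 0 g = 0) (hg1 : coeff 1 g = 1)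
    (heqf : 2 * f * D f = rescale 2 f * ((D f)^2 - f * D (D f)))
    (heqg : 2 * g * D g = rescale 2 g * ((D g)^2 - g * D (D g)))
    (h3 : coeff 3 f = coeff 3 g) (h5 : coeff 5 f = coeff 5 g) : f = g := by
  ext n
  induction n using Nat.strong_induction_on with
  | _ n ih =>
    match n with
    | 0 => rw [hf0, hg0]
    | 1 => rw [hf1, hg1]
    | 2 =>
      refine heq_step f g hf1 hg0 hg1 heqf heqg 0 ?_ (fun i hi => ih i (by omega))
      norm_num
    | 3 => exact h3
    | 4 =>
      refine heq_step f g hf1 hg0 hg1 heqf heqg 2 ?_ (fun i hi => ih i (by omega))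
      norm_num
    | 5 => exact h5
    | (m+6) =>
      exact heq_step f g hf1 hg0 hg1 heqf heqg (m+4)
        (hfac (m+4) (by omega) (by omega)) (fun i hi => ih i (by omega))

end S8
end

open S8 in
/-- **Theorem 1.2 (uniqueness).** If `f ∈ X + X²ℂ[[X]]` satisfies
`𝔗²f(X) = f(2X)/2`, i.e. `2·f·f' = (f∘(2X))·((f')² − f·f'')`, then there exist
`a, b ∈ ℂ` with `(f')² = (1 − a·f²)·(1 − b·f²)`; equivalently `f = Θ_k(AX)/A`
is a scaled formal Jacobi elliptic sine (with `a = A²`, `b = k²A²`). -/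
theorem statement8 (f : PowerSeries ℂ)
    (h0 : coeff 0 f = 0) (h1 : coeff 1 f = 1)
    (heq : 2 * f * d⁄dX ℂ f =
      rescale 2 f * ((d⁄dX ℂ f) ^ 2 - f * d⁄dX ℂ (d⁄dX ℂ f))) :
    ∃ a b : ℂ, (d⁄dX ℂ f) ^ 2 = (1 - C a * f ^ 2) * (1 - C b * f ^ 2) := by
  set s : ℂ := -6 * coeff 3 f with hs
  set p : ℂ := 10 * coeff 5 f - 3 * (coeff 3 f)^2 with hp
  have hfg : f = S8.g s p := by
    apply heq_unique f (S8.g s p) h0 h1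
      (by rw [coeff_g, c_zero]) (by rw [coeff_g, c_one]) heq (g_heq s p)
    · rw [coeff_g, c_three, hs]; ring
    · rw [coeff_g, c_five, hs, hp]; ring
  have FI := first_integral s p
  rw [← hfg] at FI
  obtain ⟨w, hw⟩ : ∃ w : ℂ, w^2 = s^2 - 4*p :=
    IsAlgClosed.exists_pow_nat_eq (s^2 - 4*p) (n := 2) (by norm_num)
  refine ⟨(s+w)/2, (s-w)/2, ?_⟩
  have hCs : C ((s+w)/2) + C ((s-w)/2) = C s := by
    rw [← map_add]; congr 1; ring
  have hCp : C ((s+w)/2) * C ((s-w)/2) = C p := by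
    rw [← map_mul]; congr 1
    linear_combination (-1/4 : ℂ) * hw
  linear_combination FI + f^2 * hCs - f^4 * hCp
end

section
/- Let f, g ∈ X + X²ℂ[[X]] both satisfy the equation 2·h·h' = (h∘(2X))·((h')² − h·h'') (i.e. 𝔗²h(X) = h(2X)/2), and suppose coeff_3 f = coeff_3 g and coeff_5 f = coeff_5 g. Then f = g. (This is the content of Proposition 1.8: a solution of 𝔗²f = f(2X)/2 is uniquely determined by its coefficients of X³ and X⁵, which is why any solution with the appropriate initial coefficients must equal Θ_k(AX)/A.) -/
open PowerSeries

private lemma key1 (P E : PowerSeries ℂ) (m : ℕ) (hE : ∀ k < m + 2, coeff k E = 0) :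
    coeff (m+2) (P * E) = coeff 0 P * coeff (m+2) E := by
  rw [coeff_mul, Finset.Nat.sum_antidiagonal_eq_sum_range_succ_mk, Finset.sum_range_succ']
  have : ∀ i ∈ Finset.range (m+2), coeff (i+1) P * coeff (m + 2 - (i+1)) E = 0 := by
    intro i hi
    rw [hE _ (by simp at hi; omega), mul_zero]
  rw [Finset.sum_eq_zero this]
  simp

private lemma key2 (P E : PowerSeries ℂ) (m : ℕ) (hE : ∀ k < m + 1, coeff k E = 0) :
    coeff (m+2) (P * E) = coeff 0 P * coeff (m+2) E + coeff 1 P * coeff (m+1) E := by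
  rw [coeff_mul, Finset.Nat.sum_antidiagonal_eq_sum_range_succ_mk, Finset.sum_range_succ',
    Finset.sum_range_succ']
  have : ∀ i ∈ Finset.range (m+1), coeff (i+1+1) P * coeff (m + 2 - (i+1+1)) E = 0 := by
    intro i hi
    rw [hE _ (by simp at hi; omega), mul_zero]
  rw [Finset.sum_eq_zero this]
  have h1 : m + 2 - 1 = m + 1 := by omega
  simp [h1]; ring

private lemma key3 (P E : PowerSeries ℂ) (m : ℕ) (hE : ∀ k < m, coeff k E = 0) :
    coeff (m+2) (P * E) = coeff 0 P * coeff (m+2) E + coeff 1 P * coeff (m+1) E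
      + coeff 2 P * coeff m E := by
  rw [coeff_mul, Finset.Nat.sum_antidiagonal_eq_sum_range_succ_mk, Finset.sum_range_succ',
    Finset.sum_range_succ', Finset.sum_range_succ']
  have : ∀ i ∈ Finset.range m, coeff (i+1+1+1) P * coeff (m + 2 - (i+1+1+1)) E = 0 := by
    intro i hi
    rw [hE _ (by simp at hi; omega), mul_zero]
  rw [Finset.sum_eq_zero this]
  have h1 : m + 2 - 1 = m + 1 := by omega
  have h2 : m + 2 - 2 = m := by omega
  simp [h1, h2]; ring

private lemma c0mul (a b : PowerSeries ℂ) :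
    coeff 0 (a * b) = coeff 0 a * coeff 0 b := by
  simp [coeff_zero_eq_constantCoeff, map_mul]

private lemma c1mul (a b : PowerSeries ℂ) :
    coeff 1 (a * b) = coeff 0 a * coeff 1 b + coeff 1 a * coeff 0 b := by
  simp [coeff_one_mul, coeff_zero_eq_constantCoeff]; ring

private lemma c2mul (a b : PowerSeries ℂ) :
    coeff 2 (a * b) = coeff 0 a * coeff 2 b + coeff 1 a * coeff 1 b
      + coeff 2 a * coeff 0 b := by
  have := key3 a b 0 (by omega)
  simpa using this

private lemma natneq (m : ℕ) (h1 : m ≠ 1) (h3 : m ≠ 3) : 2*(m+1)^2 ≠ 2^(m+2) := by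
  rcases lt_or_ge m 4 with h | h
  · interval_cases m <;> simp_all
  · have key : ∀ n, 4 ≤ n → 2*(n+1)^2 < 2^(n+2) := by
      intro n hn
      induction n with
      | zero => omega
      | succ k ih =>
        rcases Nat.lt_or_ge k 4 with hk | hk
        · interval_cases k <;> simp_all
        · have h2 : 2^(k+3) = 2*2^(k+2) := by ring
          nlinarith [ih (by omega)]
    exact Nat.ne_of_lt (key m h)

/-- **Proposition 1.8.** A normalized solution of `𝔗²f(X) = f(2X)/2` (division-free:
`2·f·f' = (f∘(2X))·((f')² − f·f'')`) is uniquely determined by its coefficients of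
`X³` and `X⁵`: if two such solutions agree there, they are equal. -/
theorem statement9 (f g : PowerSeries ℂ)
    (hf0 : coeff 0 f = 0) (hf1 : coeff 1 f = 1)
    (hg0 : coeff 0 g = 0) (hg1 : coeff 1 g = 1)
    (heqf : 2 * f * d⁄dX ℂ f =
      rescale 2 f * ((d⁄dX ℂ f) ^ 2 - f * d⁄dX ℂ (d⁄dX ℂ f)))
    (heqg : 2 * g * d⁄dX ℂ g =
      rescale 2 g * ((d⁄dX ℂ g) ^ 2 - g * d⁄dX ℂ (d⁄dX ℂ g)))
    (h3 : coeff 3 f = coeff 3 g) (h5 : coeff 5 f = coeff 5 g) :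
    f = g := by
  ext n
  induction n using Nat.strong_induction_on with
  | _ n IH =>
  match n with
  | 0 => rw [hf0, hg0]
  | 1 => rw [hf1, hg1]
  | 3 => exact h3
  | 5 => exact h5
  | (k+2) =>
    by_cases hk1 : k = 1
    · subst hk1; exact h3
    by_cases hk3 : k = 3
    · subst hk3; exact h5
    obtain ⟨e, rfl⟩ : ∃ e, g = f + e := ⟨g - f, by ring⟩
    have hek : ∀ j < k + 2, coeff j e = 0 := by
      intro j hj
      have := IH j hj
      rw [map_add, left_eq_add] at this
      exact this
    suffices hce : coeff (k+2) e = 0 by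
      rw [map_add, hce, add_zero]
    have he' : ∀ j < k + 1, coeff j (d⁄dX ℂ e) = 0 := by
      intro j hj
      rw [coeff_derivative, hek (j+1) (by omega), zero_mul]
    have he'' : ∀ j < k, coeff j (d⁄dX ℂ (d⁄dX ℂ e)) = 0 := by
      intro j hj
      rw [coeff_derivative, he' (j+1) (by omega), zero_mul]
    have her : ∀ j < k + 2, coeff j (rescale 2 e) = 0 := by
      intro j hj
      rw [coeff_rescale, hek j hj, mul_zero]
    simp only [map_add] at heqg
    have master : (2*f) * (d⁄dX ℂ e) + (2*d⁄dX ℂ f) * e + (2*d⁄dX ℂ e) * e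
        = (2*(rescale 2 f) * d⁄dX ℂ f) * d⁄dX ℂ e
        + ((rescale 2 f) * d⁄dX ℂ e) * d⁄dX ℂ e
        - ((rescale 2 f) * f) * (d⁄dX ℂ (d⁄dX ℂ e))
        - ((rescale 2 f) * (d⁄dX ℂ (d⁄dX ℂ f))) * e
        - ((rescale 2 f) * (d⁄dX ℂ (d⁄dX ℂ e))) * e
        + ((d⁄dX ℂ f + d⁄dX ℂ e)^2
            - (f+e) * (d⁄dX ℂ (d⁄dX ℂ f) + d⁄dX ℂ (d⁄dX ℂ e))) * (rescale 2 e) := by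
      linear_combination heqg - heqf
    have hc := congrArg (coeff (k+2)) master
    simp only [map_add, map_sub] at hc
    rw [key2 (2*f) (d⁄dX ℂ e) k he',
      key1 (2*d⁄dX ℂ f) e k hek,
      key1 (2*d⁄dX ℂ e) e k hek,
      key2 (2*(rescale 2 f) * d⁄dX ℂ f) (d⁄dX ℂ e) k he',
      key2 ((rescale 2 f) * d⁄dX ℂ e) (d⁄dX ℂ e) k he',
      key3 ((rescale 2 f) * f) (d⁄dX ℂ (d⁄dX ℂ e)) k he'',
      key1 ((rescale 2 f) * (d⁄dX ℂ (d⁄dX ℂ f))) e k hek,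
      key1 ((rescale 2 f) * (d⁄dX ℂ (d⁄dX ℂ e))) e k hek,
      key1 _ (rescale 2 e) k her] at hc
    have h0e : coeff 0 e = 0 := hek 0 (by omega)
    have h1e : coeff 1 e = 0 := hek 1 (by omega)
    -- small coefficients
    simp only [c0mul, c1mul, c2mul, map_mul, map_sub, map_add, map_pow, map_ofNat,
      coeff_rescale, coeff_derivative, coeff_zero_eq_constantCoeff] at hc
    have Hf0 : constantCoeff f = 0 := by rw [← coeff_zero_eq_constantCoeff]; exact hf0
    have He0 : constantCoeff e = 0 := by rw [← coeff_zero_eq_constantCoeff]; exact h0e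
    have Hdf : constantCoeff (d⁄dX ℂ f) = 1 := by
      rw [← coeff_zero_eq_constantCoeff, coeff_derivative, hf1]; norm_num
    have Hde : constantCoeff (d⁄dX ℂ e) = 0 := by
      rw [← coeff_zero_eq_constantCoeff, coeff_derivative, h1e, zero_mul]
    have H2 : coeff 1 (2 : PowerSeries ℂ) = 0 := by
      have : (2 : PowerSeries ℂ) = C 2 := by simp [map_ofNat]
      rw [this, coeff_C]; norm_num
    have i1 : k+1+1 = k+2 := by omega
    have i2 : k+2+1 = k+3 := by omega
    have i3 : k+1+1+1 = k+3 := by omega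
    have i4 : k+2+1+1 = k+4 := by omega
    have i5 : (0:ℕ)+1+1 = 2 := by omega
    rw [i1, i2, i3, i4, i5] at hc
    simp only [Hf0, He0, Hdf, Hde, H2, hf1, h0e, h1e, zero_mul, mul_zero, zero_add,
      add_zero, zero_sub, sub_zero, one_mul, mul_one, pow_zero, pow_one,
      Nat.cast_ofNat, Nat.cast_zero, Nat.cast_add, Nat.cast_one] at hc
    have hfac : coeff (k+2) e * (2*((k:ℂ)+1)^2 - 2^(k+2)) = 0 := by
      linear_combination hc
    have hne : (2*((k:ℂ)+1)^2 - 2^(k+2)) ≠ 0 := by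
      intro h
      apply natneq k hk1 hk3
      have hcast : ((2*(k+1)^2 : ℕ) : ℂ) = ((2^(k+2) : ℕ) : ℂ) := by
        push_cast
        linear_combination h
      exact_mod_cast hcast
    exact (mul_eq_zero.mp hfac).resolve_right hne
end

section
/- Let f, g, F, G ∈ X + X²ℂ[[X]] satisfy F = f·F' and G = g·G' (i.e. 𝔗F = f and 𝔗G = g, so F = 𝔗⁻¹f and G = 𝔗⁻¹g), together with f·F = g·G. Then there exists a constant A ∈ ℂ such that g = f·(1 + A·F). (This is the key lemma in Proposition 2.5: the identity f·𝔗⁻¹f = g·𝔗⁻¹g forces g = f·(1 + A·𝔗⁻¹f), equivalently 𝔗⁻²g = e^{AX}·𝔗⁻²f.) -/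
open PowerSeries

private lemma aux_const (h b : PowerSeries ℂ)
    (hb0 : coeff 0 b = 0) (hb1 : coeff 1 b = 0) (hb2 : coeff 2 b = 1)
    (h0 : coeff 0 h = 0) (h1 : coeff 1 h = 0) (h2 : coeff 2 h = 0)
    (heq : d⁄dX ℂ h * b = h * d⁄dX ℂ b) : h = 0 := by
  ext n
  induction n using Nat.strong_induction_on with
  | _ n ih =>
    rcases n with _ | _ | _ | m
    · simpa using h0
    · simpa using h1
    · simpa using h2
    · simp only [map_zero]
      have H := congrArg (coeff (m + 4)) heq
      rw [coeff_mul, coeff_mul] at H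
      have L : (∑ p ∈ Finset.HasAntidiagonal.antidiagonal (m + 4),
          coeff p.1 (d⁄dX ℂ h) * coeff p.2 b) = (m + 3 : ℂ) * coeff (m + 3) h := by
        rw [Finset.sum_eq_single ((m + 2 : ℕ), (2 : ℕ))]
        · rw [coeff_derivative, hb2]
          push_cast
          ring
        · rintro ⟨i, j⟩ hmem hne
          rw [Finset.HasAntidiagonal.mem_antidiagonal] at hmem
          rcases j with _ | _ | j
          · simp [hb0]
          · simp [hb1]
          · have hne' : ¬(i = m + 2 ∧ j + 2 = 2) := by
              simpa [Prod.ext_iff] using hne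
            have hi : i + 1 < m + 3 := by omega
            rw [coeff_derivative, ih _ hi]
            simp
        · intro hnot
          exact absurd (Finset.HasAntidiagonal.mem_antidiagonal.mpr (by omega)) hnot
      have R : (∑ p ∈ Finset.HasAntidiagonal.antidiagonal (m + 4),
          coeff p.1 h * coeff p.2 (d⁄dX ℂ b)) = 2 * coeff (m + 3) h := by
        rw [Finset.sum_eq_single ((m + 3 : ℕ), (1 : ℕ))]
        · rw [coeff_derivative, hb2]
          push_cast
          ring
        · rintro ⟨i, j⟩ hmem hne
          rw [Finset.HasAntidiagonal.mem_antidiagonal] at hmem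
          rcases Nat.lt_or_ge i (m + 3) with hi | hi
          · rw [ih _ hi]; simp
          · have hne' : ¬(i = m + 3 ∧ j = 1) := by simpa [Prod.ext_iff] using hne
            have : i = m + 4 ∧ j = 0 := by omega
            rw [this.1, this.2, coeff_derivative]
            simp [hb1]
        · intro hnot
          exact absurd (Finset.HasAntidiagonal.mem_antidiagonal.mpr (by omega)) hnot
      rw [L, R] at H
      have : ((m : ℂ) + 1) * coeff (m + 3) h = 0 := by linear_combination H
      rcases mul_eq_zero.mp this with hc | hc
      · exfalso
        have hm : ((m + 1 : ℕ) : ℂ) ≠ 0 := Nat.cast_ne_zero.mpr (Nat.succ_ne_zero m)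
        push_cast at hm
        exact hm hc
      · exact hc

/-- **Key lemma in Proposition 2.5.** Let `f, g ∈ X + X²ℂ[[X]]` with 𝔗-preimages
`F = 𝔗⁻¹f` and `G = 𝔗⁻¹g` (normalized series with `F = f·F'`, `G = g·G'`).
If `f·F = g·G`, then `g = f·(1 + A·F)` for some constant `A ∈ ℂ`
(equivalently `𝔗⁻²g = e^{AX}·𝔗⁻²f`). -/
theorem statement14 (f g F G : PowerSeries ℂ)
    (hf0 : coeff 0 f = 0) (hf1 : coeff 1 f = 1)
    (hg0 : coeff 0 g = 0) (hg1 : coeff 1 g = 1)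
    (hF0 : coeff 0 F = 0) (hF1 : coeff 1 F = 1)
    (hG0 : coeff 0 G = 0) (hG1 : coeff 1 G = 1)
    (hF : F = f * d⁄dX ℂ F) (hG : G = g * d⁄dX ℂ G)
    (hfg : f * F = g * G) :
    ∃ A : ℂ, g = f * (1 + C A * F) := by
  -- the key differential identity F'·G² = G'·F²
  have key : d⁄dX ℂ F * G ^ 2 = d⁄dX ℂ G * F ^ 2 := by
    linear_combination (d⁄dX ℂ F * G) * hG - (d⁄dX ℂ G * F) * hF
      - (d⁄dX ℂ F * d⁄dX ℂ G) * hfg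
  set A : ℂ := coeff 2 F - coeff 2 G with hA
  set b : PowerSeries ℂ := F * G with hb
  set h : PowerSeries ℂ := F - G - C A * b with hh
  have hdb : d⁄dX ℂ b = d⁄dX ℂ F * G + F * d⁄dX ℂ G := by
    rw [hb, Derivation.leibniz, smul_eq_mul, smul_eq_mul]; ring
  have hdh : d⁄dX ℂ h = d⁄dX ℂ F - d⁄dX ℂ G - C A * d⁄dX ℂ b := by
    rw [hh, map_sub, map_sub, ← smul_eq_C_mul b A, Derivation.map_smul, smul_eq_C_mul]
  have hb0 : coeff 0 b = 0 := by
    rw [hb, coeff_mul, Finset.Nat.sum_antidiagonal_eq_sum_range_succ_mk]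
    simp [hF0]
  have hb1 : coeff 1 b = 0 := by
    rw [hb, coeff_mul, Finset.Nat.sum_antidiagonal_eq_sum_range_succ_mk]
    simp [Finset.sum_range_succ, hF0, hG0]
  have hb2 : coeff 2 b = 1 := by
    rw [hb, coeff_mul, Finset.Nat.sum_antidiagonal_eq_sum_range_succ_mk]
    simp [Finset.sum_range_succ, hF0, hG0, hF1, hG1]
  have heq : d⁄dX ℂ h * b = h * d⁄dX ℂ b := by
    rw [hdh, hdb, hh, hb]
    linear_combination key
  have hzero : h = 0 := by
    apply aux_const h b hb0 hb1 hb2 _ _ _ heq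
    · rw [hh, map_sub, map_sub, coeff_C_mul, hF0, hG0, hb0]; ring
    · rw [hh, map_sub, map_sub, coeff_C_mul, hF1, hG1, hb1]; ring
    · rw [hh, map_sub, map_sub, coeff_C_mul, hb2, hA]; ring
  have hFG : F = G + C A * (F * G) := by
    have : F - G - C A * (F * G) = 0 := hzero
    linear_combination this
  refine ⟨A, ?_⟩
  have hGne : G ≠ 0 := by
    intro hG0'
    rw [hG0'] at hG1
    simp at hG1
  apply mul_right_cancel₀ hGne
  linear_combination -hfg + f * hFG
end

section
/- Let q ∈ X + X²ℂ[[X]] and c ∈ ℂ satisfy (q')² − q·q'' = exp(cX), where exp(cX) := Σ_{k≥0} cᵏXᵏ/k!. Then there exist c₁, c₂ ∈ ℂ such that q = Δ_{c₁}·exp(−c₂X), where Δ_p := Σ_{k≥1} p^{k−1}Xᵏ/k! (so Δ_p = (e^{pX}−1)/p for p ≠ 0 and Δ₀ = X). In particular there exists C ∈ ℂ with q'' − c·q' = C·q. -/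
open PowerSeries

/-- `Δ_p = (e^{pX} − 1)/p`, the power series with coefficient `p^{k−1}/k!` at `Xᵏ`
for `k ≥ 1` (and `Δ₀ = X`). -/
noncomputable def Delta (p : ℂ) : PowerSeries ℂ :=
  PowerSeries.mk fun k => if k = 0 then 0 else p ^ (k - 1) / (k.factorial : ℂ)

/-- The power series `exp(cX) = Σ_{k≥0} cᵏXᵏ/k!`. -/
noncomputable def expC (c : ℂ) : PowerSeries ℂ :=
  PowerSeries.mk fun k => c ^ k / (k.factorial : ℂ)

lemma deriv_expC (c : ℂ) : d⁄dX ℂ (expC c) = C c * expC c := by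
  ext n
  rw [coeff_derivative]
  simp only [expC, coeff_mk, coeff_C_mul, Nat.factorial_succ, pow_succ, Nat.cast_mul]
  have h1 : ((n:ℂ)+1) ≠ 0 := Nat.cast_add_one_ne_zero n
  have h2 : (n.factorial : ℂ) ≠ 0 := by exact_mod_cast Nat.cast_ne_zero.mpr n.factorial_ne_zero
  field_simp
  push_cast
  ring

lemma deriv_Delta (p : ℂ) : d⁄dX ℂ (Delta p) = expC p := by
  ext n
  rw [coeff_derivative]
  simp only [Delta, expC, coeff_mk, Nat.succ_ne_zero, if_false, Nat.add_sub_cancel,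
    Nat.factorial_succ, Nat.cast_mul]
  have h1 : ((n:ℂ)+1) ≠ 0 := Nat.cast_add_one_ne_zero n
  have h2 : (n.factorial : ℂ) ≠ 0 := by exact_mod_cast Nat.cast_ne_zero.mpr n.factorial_ne_zero
  field_simp
  push_cast
  ring

lemma wronskian_zero (q g : PowerSeries ℂ) (h0 : coeff 0 q = 0)
    (h1 : coeff 1 q = 1)
    (hrel : q * d⁄dX ℂ g = d⁄dX ℂ q * g)
    (hg0 : coeff 0 g = 0) (hg1 : coeff 1 g = 0) : g = 0 := by
  have hco : ∀ n, coeff n g = 0 := by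
    intro n
    induction n using Nat.strong_induction_on with
    | _ n IH =>
      match n with
      | 0 => exact hg0
      | 1 => exact hg1
      | (m+2) =>
        have key := congrArg (coeff (m+2)) hrel
        rw [coeff_mul, coeff_mul] at key
        have hL : ∑ p ∈ Finset.HasAntidiagonal.antidiagonal (m+2), coeff p.1 q * coeff p.2 (d⁄dX ℂ g)
            = ((m:ℂ)+2) * coeff (m+2) g := by
          rw [Finset.sum_eq_single (1, m+1)]
          · rw [coeff_derivative, h1]; push_cast; ring
          · rintro ⟨i, j⟩ hmem hne
            rw [Finset.HasAntidiagonal.mem_antidiagonal] at hmem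
            match i with
            | 0 => simp [h0]
            | 1 =>
              exfalso; apply hne
              have : j = m+1 := by omega
              simp [this]
            | (i+2) =>
              have hj : j + 1 < m + 2 := by omega
              rw [coeff_derivative, IH (j+1) hj, zero_mul, mul_zero]
          · intro habs
            exact absurd (Finset.HasAntidiagonal.mem_antidiagonal.mpr (by omega)) habs
        have hR : ∑ p ∈ Finset.HasAntidiagonal.antidiagonal (m+2), coeff p.1 (d⁄dX ℂ q) * coeff p.2 g
            = coeff (m+2) g := by
          rw [Finset.sum_eq_single (0, m+2)]
          · rw [coeff_derivative, h1]; push_cast; ring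
          · rintro ⟨i, j⟩ hmem hne
            rw [Finset.HasAntidiagonal.mem_antidiagonal] at hmem
            match i with
            | 0 =>
              exfalso; apply hne
              have : j = m+2 := by omega
              simp [this]
            | (i+1) =>
              have hj : j < m + 2 := by omega
              rw [IH j hj, mul_zero]
          · intro habs
            exact absurd (Finset.HasAntidiagonal.mem_antidiagonal.mpr (by omega)) habs
        rw [hL, hR] at key
        have hm : ((m:ℂ)+1) ≠ 0 := Nat.cast_add_one_ne_zero m
        have : ((m:ℂ)+1) * coeff (m+2) g = 0 := by linear_combination key
        exact (mul_eq_zero.mp this).resolve_left hm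
  ext n
  rw [hco, map_zero]

lemma ode_unique (c K : ℂ) (y : PowerSeries ℂ)
    (hy : d⁄dX ℂ (d⁄dX ℂ y) = C c * d⁄dX ℂ y + C K * y)
    (hy0 : coeff 0 y = 0) (hy1 : coeff 1 y = 0) : y = 0 := by
  have hco : ∀ n, coeff n y = 0 := by
    intro n
    induction n using Nat.strong_induction_on with
    | _ n IH =>
      match n with
      | 0 => exact hy0
      | 1 => exact hy1
      | (m+2) =>
        have key := congrArg (coeff m) hy
        rw [map_add, coeff_C_mul, coeff_C_mul, coeff_derivative, coeff_derivative,
          coeff_derivative, IH m (by omega), IH (m+1) (by omega)] at key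
        have h1 : ((m:ℂ)+1) ≠ 0 := Nat.cast_add_one_ne_zero m
        have h2 : ((m:ℂ)+2) ≠ 0 := by
          have : ((m+2:ℕ):ℂ) ≠ 0 := Nat.cast_ne_zero.mpr (by omega)
          push_cast at this; exact this
        have : coeff (m+2) y * ((m:ℂ)+1) * ((m:ℂ)+2) = 0 := by
          push_cast at key; linear_combination key
        rcases mul_eq_zero.mp this with h | h
        · exact (mul_eq_zero.mp h).resolve_right h1
        · exact absurd h h2
  ext n
  rw [hco, map_zero]

/-- **The differential-equation lemma in Theorem 2.2.** If `q ∈ X + X²ℂ[[X]]`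
satisfies `(q')² − q·q'' = e^{cX}`, then `q = Δ_{c₁}·e^{−c₂X}` for some
`c₁, c₂ ∈ ℂ`; in particular `q'' − c·q' = C·q` for some constant `C`. -/
theorem statement15 (q : PowerSeries ℂ)
    (h0 : coeff 0 q = 0) (h1 : coeff 1 q = 1)
    (c : ℂ)
    (hq : (d⁄dX ℂ q) ^ 2 - q * d⁄dX ℂ (d⁄dX ℂ q) = expC c) :
    (∃ c₁ c₂ : ℂ, q = Delta c₁ * expC (-c₂)) ∧
    ∃ K : ℂ, d⁄dX ℂ (d⁄dX ℂ q) - C c * d⁄dX ℂ q = C K * q := by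
  -- differentiate the hypothesis
  have hD := congrArg (d⁄dX ℂ) hq
  rw [deriv_expC, ← hq, map_sub, Derivation.leibniz, Derivation.leibniz_pow] at hD
  simp only [smul_eq_mul, nsmul_eq_mul, Nat.cast_ofNat, pow_one] at hD
  -- 2 a₂ = c
  have hc2 : 2 * coeff 2 q = c := by
    have h := congrArg (coeff 1) hq
    rw [map_sub, sq, coeff_mul, coeff_mul] at h
    rw [show Finset.HasAntidiagonal.antidiagonal 1 = {(0,1),(1,0)} from rfl] at h
    simp [coeff_derivative, h0, h1, expC] at h
    linear_combination h
  set g : PowerSeries ℂ := d⁄dX ℂ (d⁄dX ℂ q) - C c * d⁄dX ℂ q with hgdef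
  set K : ℂ := coeff 1 g with hKdef
  have hDg : d⁄dX ℂ g = d⁄dX ℂ (d⁄dX ℂ (d⁄dX ℂ q)) - C c * d⁄dX ℂ (d⁄dX ℂ q) := by
    rw [hgdef, map_sub, Derivation.leibniz]
    simp [smul_eq_mul]
  have hg0 : coeff 0 g = 0 := by
    rw [hgdef, map_sub, coeff_C_mul, coeff_derivative, coeff_derivative, coeff_derivative, h1]
    push_cast
    linear_combination hc2
  set h : PowerSeries ℂ := g - C K * q with hhdef
  have hrel : q * d⁄dX ℂ h = d⁄dX ℂ q * h := by
    rw [hhdef, map_sub, Derivation.leibniz]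
    simp only [smul_eq_mul, derivative_C, mul_zero, add_zero]
    rw [hDg, hgdef]
    linear_combination -hD
  have hzero : h = 0 := by
    apply wronskian_zero q h h0 h1 hrel
    · rw [hhdef, map_sub, coeff_C_mul, h0, hg0]; ring
    · rw [hhdef, map_sub, coeff_C_mul, h1, ← hKdef]; ring
  have hode : d⁄dX ℂ (d⁄dX ℂ q) - C c * d⁄dX ℂ q = C K * q := by
    rw [← hgdef]; exact sub_eq_zero.mp (by rw [← hhdef]; exact hzero)
  refine ⟨?_, ⟨K, hode⟩⟩
  -- choose square root d of c² + 4K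
  obtain ⟨d, hd⟩ := IsAlgClosed.exists_pow_nat_eq (c^2 + 4*K) zero_lt_two
  obtain ⟨s, hcs, hKs⟩ : ∃ s : ℂ, c = d + 2*s ∧ K = s^2 - c*s :=
    ⟨(c-d)/2, by ring, by linear_combination (-1/4 : ℂ) * hd⟩
  have hDDp : d⁄dX ℂ (d⁄dX ℂ (Delta d * expC s))
      = C c * d⁄dX ℂ (Delta d * expC s) + C K * (Delta d * expC s) := by
    simp only [Derivation.leibniz, deriv_expC, deriv_Delta, derivative_C, smul_eq_mul,
      mul_zero, add_zero, zero_mul, map_add]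
    rw [hKs, hcs]
    simp only [map_add, map_sub, map_mul, map_pow, map_ofNat]
    ring
  have hp0 : coeff 0 (Delta d * expC s) = 0 := by
    rw [coeff_mul, show Finset.HasAntidiagonal.antidiagonal 0 = {(0,0)} from rfl]
    simp [Delta]
  have hp1 : coeff 1 (Delta d * expC s) = 1 := by
    rw [coeff_mul, show Finset.HasAntidiagonal.antidiagonal 1 = {(0,1),(1,0)} from rfl]
    simp [Delta, expC]
  have hqp : q - Delta d * expC s = 0 := by
    apply ode_unique c K
    · simp only [map_sub]
      rw [hDDp, show d⁄dX ℂ (d⁄dX ℂ q) = C c * d⁄dX ℂ q + C K * q by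
        linear_combination hode]
      ring
    · rw [map_sub, h0, hp0, sub_zero]
    · rw [map_sub, h1, hp1, sub_self]
  exact ⟨d, -s, by rw [neg_neg]; exact sub_eq_zero.mp hqp⟩
end
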